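/- For any finite set V of positive integers with even maximum and any k >= 1, the sum over D-permutations sigma of V of t^{c(sigma)} (where c(sigma) is the number of cycles of sigma) equals Lambda_{V ∪ R_k}(t, t, 1, 0, t, 1), where R_k consists of k odd numbers exceeding max V together with one even number exceeding those. -/

import Mathlib

attribute [local instance] Classical.propDecidable

noncomputable section

/-- The second-largest even element of `S` (0 if there is none). -/
def sndEvenMax (S : Finset ℕ) : ℕ :=
  ((S.filter fun a => Even a).erase (S.sup id)).sup id

/-- `S'`: the elements of `S` that are at most the second-largest even element. -/
def Sprime (S : Finset ℕ) : Finset ℕ := S.filter fun a => a ≤ sndEvenMax S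

/-- Generalized surjective staircases on `S`: excedent maps from `S` onto the even
elements of `S`. -/
def Staircases (S : Finset ℕ) : Finset (↥S → ↥S) :=
  Finset.univ.filter fun f =>
    (∀ a : ↥S, (a : ℕ) ≤ (f a : ℕ) ∧ Even ((f a : ℕ))) ∧
    (∀ b : ↥S, Even (b : ℕ) → ∃ a : ↥S, f a = b)

/-- number of odd maxima -/
def moS (S : Finset ℕ) (f : ↥S → ↥S) : ℕ :=
  (Finset.univ.filter fun a : ↥S =>
    (a : ℕ) ≤ sndEvenMax S ∧ Odd (a : ℕ) ∧ ((f a : ℕ) = S.sup id)).card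

/-- number of even maxima -/
def meS (S : Finset ℕ) (f : ↥S → ↥S) : ℕ :=
  (Finset.univ.filter fun a : ↥S =>
    (a : ℕ) ≤ sndEvenMax S ∧ Even (a : ℕ) ∧ ((f a : ℕ) = S.sup id)).card

def IsFixedPtS (S : Finset ℕ) (f : ↥S → ↥S) (a : ↥S) : Prop :=
  (a : ℕ) ≤ sndEvenMax S ∧ Even (a : ℕ) ∧ f a = a

/-- number of isolated fixed points -/
def fiS (S : Finset ℕ) (f : ↥S → ↥S) : ℕ :=
  (Finset.univ.filter fun a : ↥S =>
    IsFixedPtS S f a ∧ ∀ b : ↥S, f b = a → b = a).card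

/-- number of doubled fixed points -/
def fdS (S : Finset ℕ) (f : ↥S → ↥S) : ℕ :=
  (Finset.univ.filter fun a : ↥S =>
    IsFixedPtS S f a ∧ ∃ b : ↥S, b ≠ a ∧ f b = a).card

/-- the least even element of `S` larger than `a` -/
def nextEven (S : Finset ℕ) (a : ℕ) : ℕ := sInf {b : ℕ | b ∈ S ∧ Even b ∧ a < b}

def IsSurfixedPtS (S : Finset ℕ) (f : ↥S → ↥S) (a : ↥S) : Prop :=
  (a : ℕ) ≤ sndEvenMax S ∧ Odd (a : ℕ) ∧ (f a : ℕ) = nextEven S (a : ℕ)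

/-- number of isolated surfixed points -/
def siS (S : Finset ℕ) (f : ↥S → ↥S) : ℕ :=
  (Finset.univ.filter fun a : ↥S =>
    IsSurfixedPtS S f a ∧ ∀ b : ↥S, f b = f a → b = a).card

/-- number of doubled surfixed points -/
def sdS (S : Finset ℕ) (f : ↥S → ↥S) : ℕ :=
  (Finset.univ.filter fun a : ↥S =>
    IsSurfixedPtS S f a ∧ ∃ b : ↥S, b ≠ a ∧ f b = f a).card

/-- The generalized Dumont–Foata polynomial `Λ_S`, evaluated at elements of a
commutative ring. -/
def Lam (R : Type) [CommRing R] (S : Finset ℕ) (x y z xb yb zb : R) : R :=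
  ∑ f ∈ Staircases S,
    x ^ moS S f * y ^ fdS S f * z ^ siS S f * xb ^ meS S f * yb ^ fiS S f * zb ^ sdS S f


/-- D-permutations of `V`. -/
def DPerms (V : Finset ℕ) : Finset (Equiv.Perm ↥V) :=
  Finset.univ.filter fun σ => ∀ a : ↥V,
    (Odd (a : ℕ) → (a : ℕ) ≤ ((σ a : ℕ))) ∧ (Even (a : ℕ) → ((σ a : ℕ)) ≤ (a : ℕ))

/-- The number of cycles (orbits, including fixed points) of a permutation of `↥V`. -/
def cycCount {V : Finset ℕ} (σ : Equiv.Perm ↥V) : ℕ :=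
  (Finset.univ.image fun a : ↥V => Finset.univ.filter fun b => σ.SameCycle a b).card

section CC
open Finset Equiv

variable {W : Finset ℕ}

/-- invariant colorings are constant on cycles -/
lemma inv_const {n : ℕ} (σ : Equiv.Perm ↥W) (c : ↥W → Fin n)
    (hc : ∀ a, c (σ a) = c a) {a b : ↥W} (h : σ.SameCycle a b) : c a = c b := by
  obtain ⟨i, rfl⟩ := h
  suffices h : ∀ (j : ℤ) (x : ↥W), c ((σ ^ j) x) = c x from (h i a).symm
  intro j
  induction j using Int.induction_on with
  | zero => simp
  | succ k ih =>
      intro x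
      have : (σ ^ ((k : ℤ) + 1)) x = (σ ^ (k : ℤ)) (σ x) := by
        rw [zpow_add_one]; rfl
      rw [this, ih, hc]
  | pred k ih =>
      intro x
      have : (σ ^ (-(k : ℤ) - 1)) x = (σ ^ (-(k : ℤ))) (σ⁻¹ x) := by
        rw [zpow_sub_one]; rfl
      rw [this, ih]
      have := hc (σ⁻¹ x)
      simpa using this.symm

lemma sameCycle_filter_eq (σ : Equiv.Perm ↥W) {a b : ↥W} (h : σ.SameCycle a b) :
    (Finset.univ.filter fun x => σ.SameCycle a x) =
      (Finset.univ.filter fun x => σ.SameCycle b x) := by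
  ext x
  simp only [Finset.mem_filter, Finset.mem_univ, true_and]
  exact ⟨fun hx => h.symm.trans hx, fun hx => h.trans hx⟩

lemma mem_own_class (σ : Equiv.Perm ↥W) (a : ↥W) :
    a ∈ (Finset.univ.filter fun x => σ.SameCycle a x) := by
  simp [Equiv.Perm.SameCycle.refl]

/-- the coloring characterization of `cycCount` -/
lemma card_inv_colorings (σ : Equiv.Perm ↥W) (n : ℕ) :
    Fintype.card {c : ↥W → Fin n // ∀ a, c (σ a) = c a} = n ^ cycCount σ := by
  classical
  set Orb : Finset (Finset ↥W) :=
    Finset.univ.image fun a : ↥W => Finset.univ.filter fun b => σ.SameCycle a b with hOrb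
  have hne : ∀ C ∈ Orb, C.Nonempty := by
    intro C hC
    obtain ⟨a, _, rfl⟩ := Finset.mem_image.mp hC
    exact ⟨a, mem_own_class σ a⟩
  have hclass : ∀ (C : Finset ↥W), C ∈ Orb → ∀ x ∈ C,
      C = Finset.univ.filter fun b => σ.SameCycle x b := by
    intro C hC x hx
    obtain ⟨a, _, rfl⟩ := Finset.mem_image.mp hC
    have hax : σ.SameCycle a x := by
      simpa using (Finset.mem_filter.mp hx).2
    exact sameCycle_filter_eq σ hax
  have e : {c : ↥W → Fin n // ∀ a, c (σ a) = c a} ≃ (↥Orb → Fin n) :=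
    { toFun := fun c C => c.1 ((C : Finset ↥W).min' (hne C.1 C.2))
      invFun := fun κ =>
        ⟨fun a =>
          κ ⟨Finset.univ.filter fun b => σ.SameCycle a b,
             Finset.mem_image_of_mem _ (Finset.mem_univ a)⟩, by
          intro a
          dsimp only
          congr 1
          exact Subtype.ext (sameCycle_filter_eq σ (Equiv.Perm.SameCycle.symm ⟨1, rfl⟩))⟩
      left_inv := by
        intro c
        refine Subtype.ext (funext fun a => ?_)
        dsimp only
        refine inv_const σ c.1 c.2 ?_
        have := Finset.min'_mem (Finset.univ.filter fun b => σ.SameCycle a b)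
          ⟨a, mem_own_class σ a⟩
        exact ((Finset.mem_filter.mp this).2).symm
      right_inv := by
        intro κ
        funext C
        dsimp only
        congr 1
        refine Subtype.ext ?_
        exact (hclass C.1 C.2 _ (Finset.min'_mem _ (hne C.1 C.2))).symm }
  rw [Fintype.card_congr e, Fintype.card_fun, Fintype.card_fin, Fintype.card_coe]
  congr 1

end CC
section Peel
open Finset Equiv

variable {W : Finset ℕ} {m0 : ℕ}

/-- inclusion of the erased set -/
def incl (W : Finset ℕ) (m0 : ℕ) (a : ↥(W.erase m0)) : ↥W :=
  ⟨a, Finset.mem_of_mem_erase a.2⟩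

@[simp] lemma incl_coe (a : ↥(W.erase m0)) : ((incl W m0 a : ↥W) : ℕ) = (a : ℕ) := rfl

lemma incl_injective : Function.Injective (incl W m0) := by
  intro a b h
  exact Subtype.ext (congrArg (fun x : ↥W => (x : ℕ)) h)

lemma incl_coe_ne (a : ↥(W.erase m0)) : ((incl W m0 a : ↥W) : ℕ) ≠ m0 :=
  (Finset.mem_erase.mp a.2).1

/-- extend a permutation of `W.erase m0` to `W` fixing `m0` -/
def extPerm (hm0 : m0 ∈ W) (σ' : Equiv.Perm ↥(W.erase m0)) : Equiv.Perm ↥W where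
  toFun x := if h : (x : ℕ) = m0 then x
    else incl W m0 (σ' ⟨x, Finset.mem_erase.mpr ⟨h, x.2⟩⟩)
  invFun x := if h : (x : ℕ) = m0 then x
    else incl W m0 (σ'.symm ⟨x, Finset.mem_erase.mpr ⟨h, x.2⟩⟩)
  left_inv := by
    intro x
    by_cases h : (x : ℕ) = m0
    · simp [h]
    · dsimp only
      rw [dif_neg h, dif_neg (incl_coe_ne _)]
      refine Subtype.ext ?_
      simp only [incl_coe, Subtype.coe_eta, Equiv.symm_apply_apply]
  right_inv := by
    intro x
    by_cases h : (x : ℕ) = m0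
    · simp [h]
    · dsimp only
      rw [dif_neg h, dif_neg (incl_coe_ne _)]
      refine Subtype.ext ?_
      simp only [incl_coe, Subtype.coe_eta, Equiv.apply_symm_apply]

lemma extPerm_apply_of_ne (hm0 : m0 ∈ W) (σ' : Equiv.Perm ↥(W.erase m0)) (x : ↥W)
    (h : (x : ℕ) ≠ m0) :
    extPerm hm0 σ' x = incl W m0 (σ' ⟨x, Finset.mem_erase.mpr ⟨h, x.2⟩⟩) := dif_neg h

lemma extPerm_apply_incl (hm0 : m0 ∈ W) (σ' : Equiv.Perm ↥(W.erase m0)) (a : ↥(W.erase m0)) :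
    extPerm hm0 σ' (incl W m0 a) = incl W m0 (σ' a) := by
  rw [extPerm_apply_of_ne hm0 σ' _ (incl_coe_ne a)]
  congr 1

lemma extPerm_apply_m0 (hm0 : m0 ∈ W) (σ' : Equiv.Perm ↥(W.erase m0)) :
    extPerm hm0 σ' ⟨m0, hm0⟩ = ⟨m0, hm0⟩ := dif_pos rfl

end Peel
section Cyc
open Finset Equiv

variable {W : Finset ℕ} {m0 : ℕ}

lemma cyc_eq_of_colorings {V1 V2 : Finset ℕ} (σ : Equiv.Perm ↥V1) (τ : Equiv.Perm ↥V2) (k : ℕ)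
    (h : ∀ n : ℕ, Fintype.card {c : ↥V1 → Fin n // ∀ a, c (σ a) = c a}
        = n ^ k * Fintype.card {c : ↥V2 → Fin n // ∀ a, c (τ a) = c a}) :
    cycCount σ = cycCount τ + k := by
  have h2 := h 2
  rw [card_inv_colorings, card_inv_colorings, ← pow_add] at h2
  have := Nat.pow_right_injective (le_refl 2) h2
  omega

lemma cyc_extPerm (hm0 : m0 ∈ W) (σ' : Equiv.Perm ↥(W.erase m0)) :
    cycCount (extPerm hm0 σ') = cycCount σ' + 1 := by
  refine cyc_eq_of_colorings _ _ 1 (fun n => ?_)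
  have e : {c : ↥W → Fin n // ∀ a, c (extPerm hm0 σ' a) = c a}
      ≃ Fin n × {c : ↥(W.erase m0) → Fin n // ∀ a, c (σ' a) = c a} :=
    { toFun := fun c => (c.1 ⟨m0, hm0⟩, ⟨fun a => c.1 (incl W m0 a), fun a => by
        have := c.2 (incl W m0 a)
        rwa [extPerm_apply_incl] at this⟩)
      invFun := fun p =>
        ⟨fun x => if h : (x : ℕ) = m0 then p.1 else p.2.1 ⟨x, Finset.mem_erase.mpr ⟨h, x.2⟩⟩, by
          intro x
          dsimp only
          by_cases h : (x : ℕ) = m0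
          · have hx : extPerm hm0 σ' x = x := dif_pos h
            rw [hx]
          · have hx := extPerm_apply_of_ne hm0 σ' x h
            rw [hx]
            rw [dif_neg (incl_coe_ne _), dif_neg h]
            simp only [incl_coe, Subtype.coe_eta]
            exact p.2.2 _⟩
      left_inv := by
        intro c
        refine Subtype.ext (funext fun x => ?_)
        dsimp only
        by_cases h : (x : ℕ) = m0
        · rw [dif_pos h]
          have hx : x = ⟨m0, hm0⟩ := Subtype.ext h
          rw [hx]
        · rw [dif_neg h]
          congr 1
      right_inv := by
        intro p
        obtain ⟨k, c'⟩ := p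
        refine Prod.ext ?_ (Subtype.ext (funext fun a => ?_))
        · dsimp only
          rw [dif_pos rfl]
        · dsimp only
          rw [dif_neg (incl_coe_ne _)]
          simp only [incl_coe, Subtype.coe_eta] }
  rw [Fintype.card_congr e, Fintype.card_prod, Fintype.card_fin, pow_one]

/-- splice `m0` into the cycle structure right after `u` -/
def splicePerm (hm0 : m0 ∈ W) (σ' : Equiv.Perm ↥(W.erase m0)) (u : ↥(W.erase m0)) :
    Equiv.Perm ↥W :=
  (extPerm hm0 σ') * (Equiv.swap ⟨m0, hm0⟩ (incl W m0 u))

lemma splicePerm_apply_m0 (hm0 : m0 ∈ W) (σ' : Equiv.Perm ↥(W.erase m0)) (u : ↥(W.erase m0)) :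
    splicePerm hm0 σ' u ⟨m0, hm0⟩ = incl W m0 (σ' u) := by
  simp only [splicePerm, Equiv.Perm.mul_apply, Equiv.swap_apply_left]
  exact extPerm_apply_incl hm0 σ' u

lemma splicePerm_apply_u (hm0 : m0 ∈ W) (σ' : Equiv.Perm ↥(W.erase m0)) (u : ↥(W.erase m0)) :
    splicePerm hm0 σ' u (incl W m0 u) = ⟨m0, hm0⟩ := by
  simp only [splicePerm, Equiv.Perm.mul_apply, Equiv.swap_apply_right]
  exact extPerm_apply_m0 hm0 σ'

lemma splicePerm_apply_incl (hm0 : m0 ∈ W) (σ' : Equiv.Perm ↥(W.erase m0)) (u : ↥(W.erase m0))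
    (a : ↥(W.erase m0)) (ha : a ≠ u) :
    splicePerm hm0 σ' u (incl W m0 a) = incl W m0 (σ' a) := by
  have h1 : incl W m0 a ≠ ⟨m0, hm0⟩ := by
    intro h
    exact incl_coe_ne a (congrArg (fun x : ↥W => (x : ℕ)) h)
  have h2 : incl W m0 a ≠ incl W m0 u := fun h => ha (incl_injective h)
  simp only [splicePerm, Equiv.Perm.mul_apply, Equiv.swap_apply_of_ne_of_ne h1 h2]
  exact extPerm_apply_incl hm0 σ' a

lemma cyc_splicePerm (hm0 : m0 ∈ W) (σ' : Equiv.Perm ↥(W.erase m0)) (u : ↥(W.erase m0)) :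
    cycCount (splicePerm hm0 σ' u) = cycCount σ' := by
  have h := cyc_eq_of_colorings (splicePerm hm0 σ' u) σ' 0 (fun n => ?_)
  · simpa using h
  have e : {c : ↥W → Fin n // ∀ a, c (splicePerm hm0 σ' u a) = c a}
      ≃ {c : ↥(W.erase m0) → Fin n // ∀ a, c (σ' a) = c a} :=
    { toFun := fun c =>
        ⟨fun a => c.1 (incl W m0 a), by
          intro a
          dsimp only
          by_cases ha : a = u
          · subst ha
            have f1 : c.1 ⟨m0, hm0⟩ = c.1 (incl W m0 a) := by
              have := c.2 (incl W m0 a)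
              rwa [splicePerm_apply_u] at this
            have f2 := c.2 ⟨m0, hm0⟩
            rw [splicePerm_apply_m0] at f2
            rw [f2]
            exact f1
          · have := c.2 (incl W m0 a)
            rwa [splicePerm_apply_incl hm0 σ' u a ha] at this⟩
      invFun := fun c' =>
        ⟨fun x => if h : (x : ℕ) = m0 then c'.1 u else c'.1 ⟨x, Finset.mem_erase.mpr ⟨h, x.2⟩⟩, by
          intro x
          dsimp only
          by_cases h : (x : ℕ) = m0
          · have hx : x = ⟨m0, hm0⟩ := Subtype.ext h
            subst hx
            rw [splicePerm_apply_m0, dif_neg (incl_coe_ne _), dif_pos rfl]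
            simp only [incl_coe, Subtype.coe_eta]
            exact c'.2 u
          · by_cases hu : (⟨(x : ℕ), Finset.mem_erase.mpr ⟨h, x.2⟩⟩ : ↥(W.erase m0)) = u
            · have hx : x = incl W m0 u := by
                refine Subtype.ext ?_
                have := congrArg (fun y : ↥(W.erase m0) => (y : ℕ)) hu
                simpa using this
              subst hx
              rw [splicePerm_apply_u, dif_pos rfl, dif_neg (incl_coe_ne _)]
              simp only [incl_coe, Subtype.coe_eta]
            · have hx : x = incl W m0 ⟨(x : ℕ), Finset.mem_erase.mpr ⟨h, x.2⟩⟩ :=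
                Subtype.ext rfl
              rw [hx, splicePerm_apply_incl hm0 σ' u _ hu, dif_neg (incl_coe_ne _),
                dif_neg (incl_coe_ne _)]
              simp only [incl_coe, Subtype.coe_eta]
              exact c'.2 _⟩
      left_inv := by
        intro c
        refine Subtype.ext (funext fun x => ?_)
        dsimp only
        by_cases h : (x : ℕ) = m0
        · have hx : x = ⟨m0, hm0⟩ := Subtype.ext h
          subst hx
          rw [dif_pos rfl]
          have f1 : c.1 ⟨m0, hm0⟩ = c.1 (incl W m0 u) := by
            have := c.2 (incl W m0 u)
            rw [splicePerm_apply_u] at this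
            exact this
          exact f1.symm
        · rw [dif_neg h]
          congr 1
      right_inv := by
        intro c'
        refine Subtype.ext (funext fun a => ?_)
        dsimp only
        rw [dif_neg (incl_coe_ne _)]
        simp only [incl_coe, Subtype.coe_eta] }
  rw [Fintype.card_congr e, pow_zero, one_mul]

end Cyc
section Rest
open Finset Equiv

variable {W : Finset ℕ} {m0 : ℕ}

lemma incl_coe_mk (x : ↥W) (h : (x : ℕ) ∈ W.erase m0) :
    incl W m0 ⟨(x : ℕ), h⟩ = x := Subtype.ext rfl

/-- the auxiliary permutation fixing `m0` obtained by splicing out `m0` -/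
def sOut (hm0 : m0 ∈ W) (σ : Equiv.Perm ↥W) : Equiv.Perm ↥W :=
  σ * Equiv.swap ⟨m0, hm0⟩ (σ.symm ⟨m0, hm0⟩)

lemma sOut_fixes (hm0 : m0 ∈ W) (σ : Equiv.Perm ↥W) : sOut hm0 σ ⟨m0, hm0⟩ = ⟨m0, hm0⟩ := by
  simp [sOut, Equiv.Perm.mul_apply, Equiv.swap_apply_left]

lemma sOut_ne (hm0 : m0 ∈ W) (σ : Equiv.Perm ↥W) (x : ↥W) (hx : x ≠ ⟨m0, hm0⟩) :
    sOut hm0 σ x ≠ ⟨m0, hm0⟩ := by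
  intro h
  exact hx ((sOut hm0 σ).injective (h.trans (sOut_fixes hm0 σ).symm))

lemma sOut_symm_ne (hm0 : m0 ∈ W) (σ : Equiv.Perm ↥W) (x : ↥W) (hx : x ≠ ⟨m0, hm0⟩) :
    (sOut hm0 σ).symm x ≠ ⟨m0, hm0⟩ := by
  intro h
  apply hx
  rw [← Equiv.apply_symm_apply (sOut hm0 σ) x, h, sOut_fixes]

/-- total restriction of a permutation of `W` to `W.erase m0` (splicing out `m0`) -/
def restPerm (hm0 : m0 ∈ W) (σ : Equiv.Perm ↥W) : Equiv.Perm ↥(W.erase m0) where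
  toFun a := ⟨(sOut hm0 σ (incl W m0 a) : ℕ), Finset.mem_erase.mpr
    ⟨fun h => sOut_ne hm0 σ _ (fun hh => incl_coe_ne a (congrArg _ hh)) (Subtype.ext h),
      (sOut hm0 σ (incl W m0 a)).2⟩⟩
  invFun a := ⟨((sOut hm0 σ).symm (incl W m0 a) : ℕ), Finset.mem_erase.mpr
    ⟨fun h => sOut_symm_ne hm0 σ _ (fun hh => incl_coe_ne a (congrArg _ hh))
        (Subtype.ext h),
      ((sOut hm0 σ).symm (incl W m0 a)).2⟩⟩
  left_inv := by
    intro a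
    refine Subtype.ext ?_
    dsimp only
    rw [incl_coe_mk, Equiv.symm_apply_apply]
    rfl
  right_inv := by
    intro a
    refine Subtype.ext ?_
    dsimp only
    rw [incl_coe_mk, Equiv.apply_symm_apply]
    rfl

lemma restPerm_coe (hm0 : m0 ∈ W) (σ : Equiv.Perm ↥W) (a : ↥(W.erase m0)) :
    ((restPerm hm0 σ a : ↥(W.erase m0)) : ℕ) = ((sOut hm0 σ (incl W m0 a) : ↥W) : ℕ) := rfl

lemma restPerm_coe_of_fix (hm0 : m0 ∈ W) (σ : Equiv.Perm ↥W) (hσ : σ ⟨m0, hm0⟩ = ⟨m0, hm0⟩)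
    (a : ↥(W.erase m0)) :
    ((restPerm hm0 σ a : ↥(W.erase m0)) : ℕ) = ((σ (incl W m0 a) : ↥W) : ℕ) := by
  rw [restPerm_coe]
  have h1 : σ.symm ⟨m0, hm0⟩ = ⟨m0, hm0⟩ := by
    rw [Equiv.symm_apply_eq]; exact hσ.symm
  simp [sOut, h1, Equiv.Perm.mul_apply]

lemma restPerm_extPerm (hm0 : m0 ∈ W) (σ' : Equiv.Perm ↥(W.erase m0)) :
    restPerm hm0 (extPerm hm0 σ') = σ' := by
  refine Equiv.ext fun a => Subtype.ext ?_
  rw [restPerm_coe_of_fix hm0 _ (extPerm_apply_m0 hm0 σ') a, extPerm_apply_incl]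
  rfl

lemma extPerm_restPerm (hm0 : m0 ∈ W) (σ : Equiv.Perm ↥W) (hσ : σ ⟨m0, hm0⟩ = ⟨m0, hm0⟩) :
    extPerm hm0 (restPerm hm0 σ) = σ := by
  refine Equiv.ext fun x => ?_
  by_cases h : (x : ℕ) = m0
  · have hx : x = ⟨m0, hm0⟩ := Subtype.ext h
    subst hx
    rw [extPerm_apply_m0, hσ]
  · have hx : x = incl W m0 ⟨(x : ℕ), Finset.mem_erase.mpr ⟨h, x.2⟩⟩ := Subtype.ext rfl
    rw [hx, extPerm_apply_incl]
    refine Subtype.ext ?_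
    rw [incl_coe, restPerm_coe_of_fix hm0 σ hσ]

lemma restPerm_splicePerm (hm0 : m0 ∈ W) (σ' : Equiv.Perm ↥(W.erase m0))
    (u : ↥(W.erase m0)) : restPerm hm0 (splicePerm hm0 σ' u) = σ' := by
  have hsym : (splicePerm hm0 σ' u).symm ⟨m0, hm0⟩ = incl W m0 u := by
    rw [Equiv.symm_apply_eq, splicePerm_apply_u]
  refine Equiv.ext fun a => Subtype.ext ?_
  rw [restPerm_coe]
  simp only [sOut, hsym, Equiv.Perm.mul_apply]
  by_cases ha : a = u
  · subst ha
    rw [Equiv.swap_apply_right, splicePerm_apply_m0]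
    rfl
  · have h1 : incl W m0 a ≠ ⟨m0, hm0⟩ := fun h => incl_coe_ne a (congrArg _ h)
    have h2 : incl W m0 a ≠ incl W m0 u := fun h => ha (incl_injective h)
    rw [Equiv.swap_apply_of_ne_of_ne h1 h2, splicePerm_apply_incl hm0 σ' u a ha]
    rfl

lemma splicePerm_restPerm (hm0 : m0 ∈ W) (σ : Equiv.Perm ↥W)
    (hu : (((σ.symm ⟨m0, hm0⟩ : ↥W)) : ℕ) ∈ W.erase m0) :
    splicePerm hm0 (restPerm hm0 σ) ⟨((σ.symm ⟨m0, hm0⟩ : ↥W) : ℕ), hu⟩ = σ := by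
  set u : ↥(W.erase m0) := ⟨((σ.symm ⟨m0, hm0⟩ : ↥W) : ℕ), hu⟩ with hudef
  have hiu : incl W m0 u = σ.symm ⟨m0, hm0⟩ := Subtype.ext rfl
  refine Equiv.ext fun x => ?_
  by_cases h : (x : ℕ) = m0
  · have hx : x = ⟨m0, hm0⟩ := Subtype.ext h
    subst hx
    rw [splicePerm_apply_m0]
    refine Subtype.ext ?_
    rw [incl_coe, restPerm_coe, hiu]
    simp only [sOut, Equiv.Perm.mul_apply]
    rw [Equiv.swap_apply_right]
  · have hx : x = incl W m0 ⟨(x : ℕ), Finset.mem_erase.mpr ⟨h, x.2⟩⟩ := Subtype.ext rfl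
    by_cases hxu : (⟨(x : ℕ), Finset.mem_erase.mpr ⟨h, x.2⟩⟩ : ↥(W.erase m0)) = u
    · rw [hx, hxu, splicePerm_apply_u, hiu, Equiv.apply_symm_apply]
    · rw [hx, splicePerm_apply_incl hm0 _ u _ hxu]
      refine Subtype.ext ?_
      rw [incl_coe, restPerm_coe]
      have h1 : incl W m0 ⟨(x : ℕ), Finset.mem_erase.mpr ⟨h, x.2⟩⟩ ≠ ⟨m0, hm0⟩ := by
        intro hh
        exact h (congrArg (fun y : ↥W => (y : ℕ)) hh)
      have h2 : incl W m0 ⟨(x : ℕ), Finset.mem_erase.mpr ⟨h, x.2⟩⟩ ≠ σ.symm ⟨m0, hm0⟩ := by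
        rw [← hiu]
        exact fun hh => hxu (incl_injective hh)
      simp only [sOut, Equiv.Perm.mul_apply]
      rw [Equiv.swap_apply_of_ne_of_ne h1 h2]

end Rest
section Sums
open Finset

/-- D-permutations with conditions waived on `F` -/
def DPf (W F : Finset ℕ) : Finset (Equiv.Perm ↥W) :=
  Finset.univ.filter fun σ => ∀ a : ↥W, (a : ℕ) ∉ F →
    (Odd (a : ℕ) → (a : ℕ) ≤ ((σ a : ↥W) : ℕ)) ∧
    (Even (a : ℕ) → ((σ a : ↥W) : ℕ) ≤ (a : ℕ))

/-- excedent functions, odd values only at fixed points, evens outside `F` hit -/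
def BDf (W F : Finset ℕ) : Finset (↥W → ↥W) :=
  Finset.univ.filter fun b =>
    (∀ a : ↥W, (a : ℕ) ≤ ((b a : ↥W) : ℕ)) ∧
    (∀ a : ↥W, Odd ((b a : ↥W) : ℕ) → b a = a) ∧
    (∀ e : ↥W, Even (e : ℕ) → (e : ℕ) ∉ F → ∃ a : ↥W, b a = e)

def fixCount {W : Finset ℕ} (b : ↥W → ↥W) : ℕ :=
  (Finset.univ.filter fun a : ↥W => b a = a).card

def sumP (W F : Finset ℕ) : Polynomial ℤ :=
  ∑ σ ∈ DPf W F, Polynomial.X ^ cycCount σ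

def sumT (W F : Finset ℕ) : Polynomial ℤ :=
  ∑ b ∈ BDf W F, Polynomial.X ^ fixCount b

variable {W F : Finset ℕ} {m0 : ℕ}

lemma restPerm_coe_of_ne (hm0 : m0 ∈ W) (σ : Equiv.Perm ↥W) (a : ↥(W.erase m0))
    (ha : (a : ℕ) ≠ ((σ.symm ⟨m0, hm0⟩ : ↥W) : ℕ)) :
    ((restPerm hm0 σ a : ↥(W.erase m0)) : ℕ) = ((σ (incl W m0 a) : ↥W) : ℕ) := by
  rw [restPerm_coe]
  have h1 : incl W m0 a ≠ ⟨m0, hm0⟩ := fun h => incl_coe_ne a (congrArg (fun y : ↥W => (y : ℕ)) h)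
  have h2 : incl W m0 a ≠ σ.symm ⟨m0, hm0⟩ := fun h => ha (congrArg (fun y : ↥W => (y : ℕ)) h)
  simp only [sOut, Equiv.Perm.mul_apply]
  rw [Equiv.swap_apply_of_ne_of_ne h1 h2]

/-- case: minimum is even and not freed -/
lemma sumP_even_min (hm0 : m0 ∈ W) (hmin : ∀ x ∈ W, x ≠ m0 → m0 < x)
    (hev : Even m0) (hFm : m0 ∉ F) :
    sumP W F = Polynomial.X * sumP (W.erase m0) F := by
  have hfix : ∀ σ ∈ DPf W F, σ ⟨m0, hm0⟩ = ⟨m0, hm0⟩ := by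
    intro σ hσ
    have hc := (Finset.mem_filter.mp hσ).2 ⟨m0, hm0⟩ hFm
    have hle : ((σ ⟨m0, hm0⟩ : ↥W) : ℕ) ≤ m0 := hc.2 hev
    by_contra hne
    have := hmin ((σ ⟨m0, hm0⟩ : ↥W) : ℕ) (σ ⟨m0, hm0⟩).2
      (fun h => hne (Subtype.ext h))
    omega
  have key : sumP W F = ∑ σ' ∈ DPf (W.erase m0) F, Polynomial.X ^ (cycCount σ' + 1) := by
    refine Finset.sum_nbij' (restPerm hm0) (extPerm hm0) ?_ ?_ ?_ ?_ ?_
    · intro σ hσ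
      refine Finset.mem_filter.mpr ⟨Finset.mem_univ _, ?_⟩
      intro a haF
      have hc := (Finset.mem_filter.mp hσ).2 (incl W m0 a) haF
      rw [restPerm_coe_of_fix hm0 σ (hfix σ hσ) a]
      exact hc
    · intro σ' hσ'
      refine Finset.mem_filter.mpr ⟨Finset.mem_univ _, ?_⟩
      intro a haF
      by_cases h : (a : ℕ) = m0
      · have ha : a = ⟨m0, hm0⟩ := Subtype.ext h
        subst ha
        rw [extPerm_apply_m0]
        exact ⟨fun _ => le_refl _, fun _ => le_refl _⟩
      · have ha : a = incl W m0 ⟨(a : ℕ), Finset.mem_erase.mpr ⟨h, a.2⟩⟩ := Subtype.ext rfl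
        rw [ha, extPerm_apply_incl]
        exact (Finset.mem_filter.mp hσ').2 ⟨(a : ℕ), Finset.mem_erase.mpr ⟨h, a.2⟩⟩ haF
    · intro σ hσ
      exact extPerm_restPerm hm0 σ (hfix σ hσ)
    · intro σ' _
      exact restPerm_extPerm hm0 σ'
    · intro σ hσ
      congr 1
      have : σ = extPerm hm0 (restPerm hm0 σ) := (extPerm_restPerm hm0 σ (hfix σ hσ)).symm
      rw [this, cyc_extPerm, restPerm_extPerm]
  rw [key]
  simp only [pow_succ]
  rw [← Finset.sum_mul, mul_comm]
  rfl

/-- case: minimum is odd, or freed -/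
lemma sumP_min_free (hm0 : m0 ∈ W) (hmin : ∀ x ∈ W, x ≠ m0 → m0 < x)
    (hFev : ∀ u ∈ F, Even u) (hcase : m0 ∈ F ∨ Odd m0) :
    sumP W F = Polynomial.X * sumP (W.erase m0) (F.erase m0)
      + ∑ u ∈ (W.erase m0).filter (fun x => Even x),
          sumP (W.erase m0) (insert u (F.erase m0)) := by
  classical
  set G := F.erase m0 with hG
  have hm0le : ∀ x ∈ W, m0 ≤ x := by
    intro x hx
    by_cases h : x = m0
    · omega
    · exact le_of_lt (hmin x hx h)
  have hGF : ∀ (v : ℕ), v ≠ m0 → (v ∉ G ↔ v ∉ F) := by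
    intro v hv
    rw [hG]
    simp [Finset.mem_erase, hv]
  rw [sumP, ← Finset.sum_filter_add_sum_filter_not (DPf W F)
    (fun σ => σ ⟨m0, hm0⟩ = ⟨m0, hm0⟩)]
  congr 1
  · -- fixed part
    have key : ∑ σ ∈ (DPf W F).filter (fun σ => σ ⟨m0, hm0⟩ = ⟨m0, hm0⟩),
        (Polynomial.X : Polynomial ℤ) ^ cycCount σ
        = ∑ σ' ∈ DPf (W.erase m0) G, (Polynomial.X : Polynomial ℤ) ^ (cycCount σ' + 1) := by
      refine Finset.sum_nbij' (restPerm hm0) (extPerm hm0) ?_ ?_ ?_ ?_ ?_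
      · intro σ hσ
        obtain ⟨hσ1, hσ2⟩ := Finset.mem_filter.mp hσ
        refine Finset.mem_filter.mpr ⟨Finset.mem_univ _, ?_⟩
        intro a haG
        have haF : (a : ℕ) ∉ F := ((hGF _ (Finset.mem_erase.mp a.2).1).mp haG)
        have hc := (Finset.mem_filter.mp hσ1).2 (incl W m0 a) haF
        rw [restPerm_coe_of_fix hm0 σ hσ2 a]
        exact hc
      · intro σ' hσ'
        refine Finset.mem_filter.mpr ⟨Finset.mem_filter.mpr ⟨Finset.mem_univ _, ?_⟩,
          extPerm_apply_m0 hm0 σ'⟩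
        intro a haF
        by_cases h : (a : ℕ) = m0
        · have ha : a = ⟨m0, hm0⟩ := Subtype.ext h
          subst ha
          rw [extPerm_apply_m0]
          exact ⟨fun _ => le_refl _, fun _ => le_refl _⟩
        · have ha : a = incl W m0 ⟨(a : ℕ), Finset.mem_erase.mpr ⟨h, a.2⟩⟩ := Subtype.ext rfl
          rw [ha, extPerm_apply_incl]
          exact (Finset.mem_filter.mp hσ').2 ⟨(a : ℕ), Finset.mem_erase.mpr ⟨h, a.2⟩⟩
            ((hGF _ h).mpr haF)
      · intro σ hσ
        exact extPerm_restPerm hm0 σ (Finset.mem_filter.mp hσ).2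
      · intro σ' _
        exact restPerm_extPerm hm0 σ'
      · intro σ hσ
        congr 1
        have : σ = extPerm hm0 (restPerm hm0 σ) :=
          (extPerm_restPerm hm0 σ (Finset.mem_filter.mp hσ).2).symm
        rw [this, cyc_extPerm, restPerm_extPerm]
    rw [key]
    simp only [pow_succ]
    rw [← Finset.sum_mul, mul_comm]
    rfl
  · -- non-fixed part
    have hsig : (∑ u ∈ (W.erase m0).filter (fun x => Even x), sumP (W.erase m0) (insert u G))
        = ∑ p ∈ ((W.erase m0).filter (fun x => Even x)).sigma
            (fun u => DPf (W.erase m0) (insert u G)),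
          (Polynomial.X : Polynomial ℤ) ^ cycCount p.2 := by
      rw [Finset.sum_sigma]
      rfl
    rw [hsig]
    refine Finset.sum_nbij'
      (fun σ => ⟨((σ.symm ⟨m0, hm0⟩ : ↥W) : ℕ), restPerm hm0 σ⟩)
      (fun p => if h : p.1 ∈ W.erase m0 then splicePerm hm0 p.2 ⟨p.1, h⟩ else 1)
      ?_ ?_ ?_ ?_ ?_
    · -- i maps into sigma
      intro σ hσ
      obtain ⟨hσ1, hσ2⟩ := Finset.mem_filter.mp hσ
      have hDP := (Finset.mem_filter.mp hσ1).2
      set u : ↥W := σ.symm ⟨m0, hm0⟩ with hu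
      have hum : (u : ℕ) ≠ m0 := by
        intro h
        apply hσ2
        have h2 : σ.symm ⟨m0, hm0⟩ = ⟨m0, hm0⟩ := Subtype.ext h
        conv_lhs => rw [← h2]
        rw [Equiv.apply_symm_apply]
      have hσu : σ u = ⟨m0, hm0⟩ := Equiv.apply_symm_apply σ ⟨m0, hm0⟩
      have huev : Even (u : ℕ) := by
        by_cases hF : (u : ℕ) ∈ F
        · exact hFev _ hF
        · rcases Nat.even_or_odd (u : ℕ) with h | h
          · exact h
          · exfalso
            have h3 := (hDP u hF).1 h
            rw [hσu] at h3
            have h4 : (u : ℕ) ≤ m0 := by simpa using h3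
            have := hmin (u : ℕ) u.2 hum
            omega
      refine Finset.mem_sigma.mpr ⟨?_, ?_⟩
      · exact Finset.mem_filter.mpr ⟨Finset.mem_erase.mpr ⟨hum, u.2⟩, huev⟩
      · refine Finset.mem_filter.mpr ⟨Finset.mem_univ _, ?_⟩
        intro a haIG
        have hau : (a : ℕ) ≠ (u : ℕ) := by
          intro h
          exact haIG (Finset.mem_insert.mpr (Or.inl h))
        have haG : (a : ℕ) ∉ G := fun h => haIG (Finset.mem_insert.mpr (Or.inr h))
        have haF : (a : ℕ) ∉ F := (hGF _ (Finset.mem_erase.mp a.2).1).mp haG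
        have hc := hDP (incl W m0 a) haF
        rw [restPerm_coe_of_ne hm0 σ a hau]
        exact hc
    · -- j maps into filtered set
      intro p hp
      obtain ⟨hp1, hp2⟩ := Finset.mem_sigma.mp hp
      have hu : p.1 ∈ W.erase m0 := (Finset.mem_filter.mp hp1).1
      have huev : Even p.1 := (Finset.mem_filter.mp hp1).2
      rw [dif_pos hu]
      set u : ↥(W.erase m0) := ⟨p.1, hu⟩ with hudef
      have hDP' := (Finset.mem_filter.mp hp2).2
      refine Finset.mem_filter.mpr ⟨Finset.mem_filter.mpr ⟨Finset.mem_univ _, ?_⟩, ?_⟩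
      · intro x hxF
        by_cases h : (x : ℕ) = m0
        · have hx : x = ⟨m0, hm0⟩ := Subtype.ext h
          subst hx
          have hodd : Odd m0 := by
            rcases hcase with hc | hc
            · exact absurd (h ▸ hxF) (fun hh => hh hc)
            · exact hc
          constructor
          · intro _
            exact hm0le _ (splicePerm hm0 p.2 u ⟨m0, hm0⟩).2
          · intro hev
            exact absurd hodd (Nat.not_odd_iff_even.mpr hev)
        · by_cases hxu : (x : ℕ) = p.1
          · have hx : x = incl W m0 u := Subtype.ext hxu
            rw [hx, splicePerm_apply_u]
            constructor
            · intro hodd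
              exact absurd hodd (Nat.not_odd_iff_even.mpr huev)
            · intro _
              exact hm0le p.1 (Finset.mem_of_mem_erase hu)
          · have hx : x = incl W m0 ⟨(x : ℕ), Finset.mem_erase.mpr ⟨h, x.2⟩⟩ := Subtype.ext rfl
            have hne : (⟨(x : ℕ), Finset.mem_erase.mpr ⟨h, x.2⟩⟩ : ↥(W.erase m0)) ≠ u := by
              intro hh
              exact hxu (congrArg (fun y : ↥(W.erase m0) => (y : ℕ)) hh)
            rw [hx, splicePerm_apply_incl hm0 p.2 u _ hne]
            have hxIG : (x : ℕ) ∉ insert p.1 G := by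
              intro hh
              rcases Finset.mem_insert.mp hh with hh | hh
              · exact hxu hh
              · exact hxF (Finset.mem_of_mem_erase hh)
            exact hDP' ⟨(x : ℕ), Finset.mem_erase.mpr ⟨h, x.2⟩⟩ hxIG
      · rw [splicePerm_apply_m0]
        intro hh
        exact incl_coe_ne (p.2 u) (congrArg (fun y : ↥W => (y : ℕ)) hh)
    · -- left inverse
      intro σ hσ
      have hσ2 := (Finset.mem_filter.mp hσ).2
      have hmem : ((σ.symm ⟨m0, hm0⟩ : ↥W) : ℕ) ∈ W.erase m0 := by
        refine Finset.mem_erase.mpr ⟨?_, (σ.symm ⟨m0, hm0⟩).2⟩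
        intro h
        apply hσ2
        have h2 : σ.symm ⟨m0, hm0⟩ = ⟨m0, hm0⟩ := Subtype.ext h
        conv_lhs => rw [← h2]
        rw [Equiv.apply_symm_apply]
      dsimp only
      rw [dif_pos hmem]
      exact splicePerm_restPerm hm0 σ hmem
    · -- right inverse
      intro p hp
      obtain ⟨hp1, hp2⟩ := Finset.mem_sigma.mp hp
      have hu : p.1 ∈ W.erase m0 := (Finset.mem_filter.mp hp1).1
      rw [dif_pos hu]
      set u : ↥(W.erase m0) := ⟨p.1, hu⟩ with hudef
      have h1 : (splicePerm hm0 p.2 u).symm ⟨m0, hm0⟩ = incl W m0 u := by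
        rw [Equiv.symm_apply_eq, splicePerm_apply_u]
      obtain ⟨u0, σ'⟩ := p
      refine Sigma.ext ?_ (heq_of_eq ?_)
      · simpa using congrArg (fun y : ↥W => (y : ℕ)) h1
      · simpa using restPerm_splicePerm hm0 σ' u
    · -- values
      intro σ hσ
      congr 1
      have hσ2 := (Finset.mem_filter.mp hσ).2
      have hmem : ((σ.symm ⟨m0, hm0⟩ : ↥W) : ℕ) ∈ W.erase m0 := by
        refine Finset.mem_erase.mpr ⟨?_, (σ.symm ⟨m0, hm0⟩).2⟩
        intro h
        apply hσ2
        have h2 : σ.symm ⟨m0, hm0⟩ = ⟨m0, hm0⟩ := Subtype.ext h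
        conv_lhs => rw [← h2]
        rw [Equiv.apply_symm_apply]
      have : σ = splicePerm hm0 (restPerm hm0 σ) ⟨_, hmem⟩ :=
        (splicePerm_restPerm hm0 σ hmem).symm
      conv_lhs => rw [this]
      rw [cyc_splicePerm]

end Sums
section TSide
open Finset

variable {W F : Finset ℕ} {m0 : ℕ}

def extFun (hm0 : m0 ∈ W) (x : ↥W) (b' : ↥(W.erase m0) → ↥(W.erase m0)) : ↥W → ↥W :=
  fun a => if h : (a : ℕ) = m0 then x
    else incl W m0 (b' ⟨(a : ℕ), Finset.mem_erase.mpr ⟨h, a.2⟩⟩)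

def restFun (hm0 : m0 ∈ W) (b : ↥W → ↥W) : ↥(W.erase m0) → ↥(W.erase m0) :=
  fun a => if h : ((b (incl W m0 a) : ↥W) : ℕ) = m0 then a
    else ⟨((b (incl W m0 a) : ↥W) : ℕ), Finset.mem_erase.mpr ⟨h, (b (incl W m0 a)).2⟩⟩

lemma extFun_apply_m0 (hm0 : m0 ∈ W) (x : ↥W) (b' : ↥(W.erase m0) → ↥(W.erase m0)) :
    extFun hm0 x b' ⟨m0, hm0⟩ = x := dif_pos rfl

lemma extFun_apply_incl (hm0 : m0 ∈ W) (x : ↥W) (b' : ↥(W.erase m0) → ↥(W.erase m0))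
    (a : ↥(W.erase m0)) : extFun hm0 x b' (incl W m0 a) = incl W m0 (b' a) := by
  rw [extFun, dif_neg (incl_coe_ne a)]
  congr 1

lemma restFun_coe (hm0 : m0 ∈ W) (b : ↥W → ↥W) (a : ↥(W.erase m0))
    (h : ((b (incl W m0 a) : ↥W) : ℕ) ≠ m0) :
    ((restFun hm0 b a : ↥(W.erase m0)) : ℕ) = ((b (incl W m0 a) : ↥W) : ℕ) := by
  rw [restFun, dif_neg h]

lemma restFun_extFun (hm0 : m0 ∈ W) (x : ↥W) (b' : ↥(W.erase m0) → ↥(W.erase m0)) :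
    restFun hm0 (extFun hm0 x b') = b' := by
  funext a
  refine Subtype.ext ?_
  rw [restFun_coe hm0 _ a (by rw [extFun_apply_incl]; exact incl_coe_ne _),
    extFun_apply_incl]
  rfl

lemma extFun_restFun (hm0 : m0 ∈ W) (b : ↥W → ↥W)
    (hb : ∀ a : ↥(W.erase m0), ((b (incl W m0 a) : ↥W) : ℕ) ≠ m0) :
    extFun hm0 (b ⟨m0, hm0⟩) (restFun hm0 b) = b := by
  funext z
  by_cases h : (z : ℕ) = m0
  · have hz : z = ⟨m0, hm0⟩ := Subtype.ext h
    subst hz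
    rw [extFun_apply_m0]
  · have hz : z = incl W m0 ⟨(z : ℕ), Finset.mem_erase.mpr ⟨h, z.2⟩⟩ := Subtype.ext rfl
    rw [hz, extFun_apply_incl]
    refine Subtype.ext ?_
    rw [incl_coe, restFun_coe hm0 b _ (hb _)]

def inclEmb (W : Finset ℕ) (m0 : ℕ) : ↥(W.erase m0) ↪ ↥W := ⟨incl W m0, incl_injective⟩

lemma fix_filter_extFun (hm0 : m0 ∈ W) (x : ↥W) (b' : ↥(W.erase m0) → ↥(W.erase m0))
    (hx : (x : ℕ) ≠ m0) :
    (Finset.univ.filter fun a : ↥W => extFun hm0 x b' a = a)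
      = (Finset.univ.filter fun a : ↥(W.erase m0) => b' a = a).map (inclEmb W m0) := by
  ext z
  simp only [Finset.mem_filter, Finset.mem_univ, true_and, Finset.mem_map]
  constructor
  · intro hz
    by_cases h : (z : ℕ) = m0
    · exfalso
      have hzm : z = ⟨m0, hm0⟩ := Subtype.ext h
      rw [hzm, extFun_apply_m0] at hz
      exact hx (congrArg (fun y : ↥W => (y : ℕ)) hz)
    · have hz2 : z = incl W m0 ⟨(z : ℕ), Finset.mem_erase.mpr ⟨h, z.2⟩⟩ := Subtype.ext rfl
      rw [hz2, extFun_apply_incl] at hz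
      exact ⟨⟨(z : ℕ), Finset.mem_erase.mpr ⟨h, z.2⟩⟩, ⟨incl_injective hz, hz2.symm⟩⟩
  · rintro ⟨a, ha, rfl⟩
    show extFun hm0 x b' (incl W m0 a) = incl W m0 a
    rw [extFun_apply_incl, ha]

lemma fixCount_extFun_ne (hm0 : m0 ∈ W) (x : ↥W) (b' : ↥(W.erase m0) → ↥(W.erase m0))
    (hx : (x : ℕ) ≠ m0) : fixCount (extFun hm0 x b') = fixCount b' := by
  rw [fixCount, fix_filter_extFun hm0 x b' hx, Finset.card_map]
  rfl

lemma fixCount_extFun_m0 (hm0 : m0 ∈ W) (b' : ↥(W.erase m0) → ↥(W.erase m0)) :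
    fixCount (extFun hm0 ⟨m0, hm0⟩ b') = fixCount b' + 1 := by
  have hset : (Finset.univ.filter fun a : ↥W => extFun hm0 ⟨m0, hm0⟩ b' a = a)
      = insert ⟨m0, hm0⟩
        ((Finset.univ.filter fun a : ↥(W.erase m0) => b' a = a).map (inclEmb W m0)) := by
    ext z
    simp only [Finset.mem_filter, Finset.mem_univ, true_and, Finset.mem_insert, Finset.mem_map]
    constructor
    · intro hz
      by_cases h : (z : ℕ) = m0
      · exact Or.inl (Subtype.ext h)
      · have hz2 : z = incl W m0 ⟨(z : ℕ), Finset.mem_erase.mpr ⟨h, z.2⟩⟩ := Subtype.ext rfl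
        rw [hz2, extFun_apply_incl] at hz
        exact Or.inr ⟨⟨(z : ℕ), Finset.mem_erase.mpr ⟨h, z.2⟩⟩, ⟨incl_injective hz, hz2.symm⟩⟩
    · intro hz
      rcases hz with hz | ⟨a, ha, rfl⟩
      · rw [hz, extFun_apply_m0]
      · show extFun hm0 ⟨m0, hm0⟩ b' (incl W m0 a) = incl W m0 a
        rw [extFun_apply_incl, ha]
  rw [fixCount, hset, Finset.card_insert_of_notMem, Finset.card_map]
  · rfl
  · intro hmem
    obtain ⟨a, _, ha⟩ := Finset.mem_map.mp hmem
    exact incl_coe_ne a (congrArg (fun y : ↥W => (y : ℕ)) ha)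

lemma BDf_min_fix (hm0 : m0 ∈ W) (hmin : ∀ x ∈ W, x ≠ m0 → m0 < x)
    {b : ↥W → ↥W} (hb : b ∈ BDf W F) (a : ↥(W.erase m0)) :
    ((b (incl W m0 a) : ↥W) : ℕ) ≠ m0 := by
  obtain ⟨_, hb1, _, _⟩ := Finset.mem_filter.mp hb
  intro h
  have h1 := hb1 (incl W m0 a)
  rw [h] at h1
  have h2 := hmin (a : ℕ) (Finset.mem_of_mem_erase a.2) (Finset.mem_erase.mp a.2).1
  simp only [incl_coe] at h1
  omega

/-- case: minimum even, not freed, for the function side -/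
lemma sumT_even_min (hm0 : m0 ∈ W) (hmin : ∀ x ∈ W, x ≠ m0 → m0 < x)
    (hev : Even m0) (hFm : m0 ∉ F) :
    sumT W F = Polynomial.X * sumT (W.erase m0) F := by
  have hm0le : ∀ x ∈ W, m0 ≤ x := by
    intro x hx
    by_cases h : x = m0
    · omega
    · exact le_of_lt (hmin x hx h)
  have hfix : ∀ b ∈ BDf W F, b ⟨m0, hm0⟩ = ⟨m0, hm0⟩ := by
    intro b hb
    obtain ⟨_, hb1, hb2, hb3⟩ := Finset.mem_filter.mp hb
    obtain ⟨a, ha⟩ := hb3 ⟨m0, hm0⟩ hev hFm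
    have h1 := hb1 a
    rw [ha] at h1
    have h2 := hm0le (a : ℕ) a.2
    have h1' : (a : ℕ) ≤ m0 := h1
    have h3 : (a : ℕ) = m0 := by omega
    have h4 : a = ⟨m0, hm0⟩ := Subtype.ext h3
    rw [h4] at ha
    exact ha
  have key : sumT W F = ∑ b' ∈ BDf (W.erase m0) F, (Polynomial.X : Polynomial ℤ) ^ (fixCount b' + 1) := by
    refine Finset.sum_nbij' (restFun hm0) (extFun hm0 ⟨m0, hm0⟩) ?_ ?_ ?_ ?_ ?_
    · intro b hb
      obtain ⟨_, hb1, hb2, hb3⟩ := Finset.mem_filter.mp hb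
      have hne := BDf_min_fix hm0 hmin hb
      refine Finset.mem_filter.mpr ⟨Finset.mem_univ _, ?_, ?_, ?_⟩
      · intro a
        rw [restFun_coe hm0 b a (hne a)]
        have := hb1 (incl W m0 a)
        simpa using this
      · intro a hodd
        rw [restFun_coe hm0 b a (hne a)] at hodd
        have := hb2 (incl W m0 a) hodd
        refine Subtype.ext ?_
        rw [restFun_coe hm0 b a (hne a), this]
        rfl
      · intro e heven heF
        obtain ⟨a, ha⟩ := hb3 (incl W m0 e) (by simpa using heven) heF
        have ham : (a : ℕ) ≠ m0 := by
          intro h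
          have h4 : a = ⟨m0, hm0⟩ := Subtype.ext h
          rw [h4, hfix b hb] at ha
          exact incl_coe_ne e (congrArg (fun y : ↥W => (y : ℕ)) ha.symm)
        refine ⟨⟨(a : ℕ), Finset.mem_erase.mpr ⟨ham, a.2⟩⟩, ?_⟩
        refine Subtype.ext ?_
        rw [restFun_coe hm0 b _ (by
          rw [show incl W m0 ⟨(a : ℕ), Finset.mem_erase.mpr ⟨ham, a.2⟩⟩ = a from Subtype.ext rfl,
            ha]
          exact incl_coe_ne e)]
        rw [show incl W m0 ⟨(a : ℕ), Finset.mem_erase.mpr ⟨ham, a.2⟩⟩ = a from Subtype.ext rfl,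
          ha]
        rfl
    · intro b' hb'
      obtain ⟨_, hb1, hb2, hb3⟩ := Finset.mem_filter.mp hb'
      refine Finset.mem_filter.mpr ⟨Finset.mem_univ _, ?_, ?_, ?_⟩
      · intro a
        by_cases h : (a : ℕ) = m0
        · have ha : a = ⟨m0, hm0⟩ := Subtype.ext h
          subst ha
          rw [extFun_apply_m0]
        · have ha : a = incl W m0 ⟨(a : ℕ), Finset.mem_erase.mpr ⟨h, a.2⟩⟩ := Subtype.ext rfl
          rw [ha, extFun_apply_incl]
          have := hb1 ⟨(a : ℕ), Finset.mem_erase.mpr ⟨h, a.2⟩⟩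
          simpa using this
      · intro a hodd
        by_cases h : (a : ℕ) = m0
        · have ha : a = ⟨m0, hm0⟩ := Subtype.ext h
          subst ha
          rw [extFun_apply_m0]
        · have ha : a = incl W m0 ⟨(a : ℕ), Finset.mem_erase.mpr ⟨h, a.2⟩⟩ := Subtype.ext rfl
          rw [ha, extFun_apply_incl]
          rw [ha, extFun_apply_incl] at hodd
          have := hb2 ⟨(a : ℕ), Finset.mem_erase.mpr ⟨h, a.2⟩⟩ (by simpa using hodd)
          rw [this]
      · intro e heven heF
        by_cases h : (e : ℕ) = m0
        · refine ⟨⟨m0, hm0⟩, ?_⟩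
          rw [extFun_apply_m0]
          exact (Subtype.ext h).symm
        · obtain ⟨a', ha'⟩ := hb3 ⟨(e : ℕ), Finset.mem_erase.mpr ⟨h, e.2⟩⟩
            (by simpa using heven) heF
          refine ⟨incl W m0 a', ?_⟩
          rw [extFun_apply_incl, ha']
          exact Subtype.ext rfl
    · intro b hb
      have := extFun_restFun hm0 b (BDf_min_fix hm0 hmin hb)
      rwa [hfix b hb] at this
    · intro b' _
      exact restFun_extFun hm0 _ b'
    · intro b hb
      congr 1
      conv_lhs => rw [← (by
        have := extFun_restFun hm0 b (BDf_min_fix hm0 hmin hb)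
        rwa [hfix b hb] at this : extFun hm0 ⟨m0, hm0⟩ (restFun hm0 b) = b)]
      rw [fixCount_extFun_m0]
  rw [key]
  simp only [pow_succ]
  rw [← Finset.sum_mul, mul_comm]
  rfl

end TSide
section TSide2
open Finset

variable {W F : Finset ℕ} {m0 : ℕ}

/-- case: minimum odd or freed, for the function side -/
lemma sumT_min_free (hm0 : m0 ∈ W) (hmin : ∀ x ∈ W, x ≠ m0 → m0 < x)
    (hFev : ∀ u ∈ F, Even u) (hcase : m0 ∈ F ∨ Odd m0) :
    sumT W F = Polynomial.X * sumT (W.erase m0) (F.erase m0)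
      + ∑ u ∈ (W.erase m0).filter (fun x => Even x),
          sumT (W.erase m0) (insert u (F.erase m0)) := by
  classical
  set G := F.erase m0 with hG
  have hm0le : ∀ x ∈ W, m0 ≤ x := by
    intro x hx
    by_cases h : x = m0
    · omega
    · exact le_of_lt (hmin x hx h)
  have hGF : ∀ (v : ℕ), v ≠ m0 → (v ∉ G ↔ v ∉ F) := by
    intro v hv
    rw [hG]
    simp [Finset.mem_erase, hv]
  rw [sumT, ← Finset.sum_filter_add_sum_filter_not (BDf W F)
    (fun b => b ⟨m0, hm0⟩ = ⟨m0, hm0⟩)]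
  congr 1
  · -- fixed part
    have key : ∑ b ∈ (BDf W F).filter (fun b => b ⟨m0, hm0⟩ = ⟨m0, hm0⟩),
        (Polynomial.X : Polynomial ℤ) ^ fixCount b
        = ∑ b' ∈ BDf (W.erase m0) G, (Polynomial.X : Polynomial ℤ) ^ (fixCount b' + 1) := by
      refine Finset.sum_nbij' (restFun hm0) (extFun hm0 ⟨m0, hm0⟩) ?_ ?_ ?_ ?_ ?_
      · intro b hbf
        obtain ⟨hb, hbfix⟩ := Finset.mem_filter.mp hbf
        obtain ⟨_, hb1, hb2, hb3⟩ := Finset.mem_filter.mp hb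
        have hne := BDf_min_fix hm0 hmin hb
        refine Finset.mem_filter.mpr ⟨Finset.mem_univ _, ?_, ?_, ?_⟩
        · intro a
          rw [restFun_coe hm0 b a (hne a)]
          have := hb1 (incl W m0 a)
          simpa using this
        · intro a hodd
          rw [restFun_coe hm0 b a (hne a)] at hodd
          have := hb2 (incl W m0 a) hodd
          refine Subtype.ext ?_
          rw [restFun_coe hm0 b a (hne a), this]
          rfl
        · intro e heven heG
          have heF : (e : ℕ) ∉ F := (hGF _ (Finset.mem_erase.mp e.2).1).mp heG
          obtain ⟨a, ha⟩ := hb3 (incl W m0 e) (by simpa using heven) heF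
          have ham : (a : ℕ) ≠ m0 := by
            intro h
            have h4 : a = ⟨m0, hm0⟩ := Subtype.ext h
            rw [h4, hbfix] at ha
            exact incl_coe_ne e (congrArg (fun y : ↥W => (y : ℕ)) ha.symm)
          refine ⟨⟨(a : ℕ), Finset.mem_erase.mpr ⟨ham, a.2⟩⟩, ?_⟩
          refine Subtype.ext ?_
          rw [restFun_coe hm0 b _ (by
            rw [show incl W m0 ⟨(a : ℕ), Finset.mem_erase.mpr ⟨ham, a.2⟩⟩ = a from
              Subtype.ext rfl, ha]
            exact incl_coe_ne e)]
          rw [show incl W m0 ⟨(a : ℕ), Finset.mem_erase.mpr ⟨ham, a.2⟩⟩ = a from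
            Subtype.ext rfl, ha]
          rfl
      · intro b' hb'
        obtain ⟨_, hb1, hb2, hb3⟩ := Finset.mem_filter.mp hb'
        refine Finset.mem_filter.mpr ⟨Finset.mem_filter.mpr
          ⟨Finset.mem_univ _, ?_, ?_, ?_⟩, extFun_apply_m0 hm0 _ b'⟩
        · intro a
          by_cases h : (a : ℕ) = m0
          · have ha : a = ⟨m0, hm0⟩ := Subtype.ext h
            subst ha
            rw [extFun_apply_m0]
          · have ha : a = incl W m0 ⟨(a : ℕ), Finset.mem_erase.mpr ⟨h, a.2⟩⟩ := Subtype.ext rfl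
            rw [ha, extFun_apply_incl]
            have := hb1 ⟨(a : ℕ), Finset.mem_erase.mpr ⟨h, a.2⟩⟩
            simpa using this
        · intro a hodd
          by_cases h : (a : ℕ) = m0
          · have ha : a = ⟨m0, hm0⟩ := Subtype.ext h
            subst ha
            rw [extFun_apply_m0]
          · have ha : a = incl W m0 ⟨(a : ℕ), Finset.mem_erase.mpr ⟨h, a.2⟩⟩ := Subtype.ext rfl
            rw [ha, extFun_apply_incl]
            rw [ha, extFun_apply_incl] at hodd
            have := hb2 ⟨(a : ℕ), Finset.mem_erase.mpr ⟨h, a.2⟩⟩ (by simpa using hodd)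
            rw [this]
        · intro e heven heF
          by_cases h : (e : ℕ) = m0
          · refine ⟨⟨m0, hm0⟩, ?_⟩
            rw [extFun_apply_m0]
            exact (Subtype.ext h).symm
          · obtain ⟨a', ha'⟩ := hb3 ⟨(e : ℕ), Finset.mem_erase.mpr ⟨h, e.2⟩⟩
              (by simpa using heven) (by
                intro hh
                exact heF (Finset.mem_of_mem_erase hh))
            refine ⟨incl W m0 a', ?_⟩
            rw [extFun_apply_incl, ha']
            exact Subtype.ext rfl
      · intro b hbf
        obtain ⟨hb, hbfix⟩ := Finset.mem_filter.mp hbf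
        have := extFun_restFun hm0 b (BDf_min_fix hm0 hmin hb)
        rwa [hbfix] at this
      · intro b' _
        exact restFun_extFun hm0 _ b'
      · intro b hbf
        obtain ⟨hb, hbfix⟩ := Finset.mem_filter.mp hbf
        congr 1
        conv_lhs => rw [← (by
          have := extFun_restFun hm0 b (BDf_min_fix hm0 hmin hb)
          rwa [hbfix] at this : extFun hm0 ⟨m0, hm0⟩ (restFun hm0 b) = b)]
        rw [fixCount_extFun_m0]
    rw [key]
    simp only [pow_succ]
    rw [← Finset.sum_mul, mul_comm]
    rfl
  · -- non-fixed part
    have hsig : (∑ u ∈ (W.erase m0).filter (fun x => Even x), sumT (W.erase m0) (insert u G))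
        = ∑ p ∈ ((W.erase m0).filter (fun x => Even x)).sigma
            (fun u => BDf (W.erase m0) (insert u G)),
          (Polynomial.X : Polynomial ℤ) ^ fixCount p.2 := by
      rw [Finset.sum_sigma]
      rfl
    rw [hsig]
    refine Finset.sum_nbij'
      (fun b => ⟨((b ⟨m0, hm0⟩ : ↥W) : ℕ), restFun hm0 b⟩)
      (fun p => extFun hm0 (if h : p.1 ∈ W then ⟨p.1, h⟩ else ⟨m0, hm0⟩) p.2)
      ?_ ?_ ?_ ?_ ?_
    · -- into sigma
      intro b hbf
      obtain ⟨hb, hbfix⟩ := Finset.mem_filter.mp hbf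
      obtain ⟨_, hb1, hb2, hb3⟩ := Finset.mem_filter.mp hb
      have hne := BDf_min_fix hm0 hmin hb
      set u : ↥W := b ⟨m0, hm0⟩ with hu
      have hum : (u : ℕ) ≠ m0 := fun h => hbfix (Subtype.ext h)
      have huev : Even (u : ℕ) := by
        rcases Nat.even_or_odd (u : ℕ) with h | h
        · exact h
        · exact absurd (hb2 ⟨m0, hm0⟩ h) hbfix
      refine Finset.mem_sigma.mpr ⟨?_, ?_⟩
      · exact Finset.mem_filter.mpr ⟨Finset.mem_erase.mpr ⟨hum, u.2⟩, huev⟩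
      · refine Finset.mem_filter.mpr ⟨Finset.mem_univ _, ?_, ?_, ?_⟩
        · intro a
          rw [restFun_coe hm0 b a (hne a)]
          have := hb1 (incl W m0 a)
          simpa using this
        · intro a hodd
          rw [restFun_coe hm0 b a (hne a)] at hodd
          have := hb2 (incl W m0 a) hodd
          refine Subtype.ext ?_
          rw [restFun_coe hm0 b a (hne a), this]
          rfl
        · intro e heven heIG
          have heu : (e : ℕ) ≠ (u : ℕ) := fun h => heIG (Finset.mem_insert.mpr (Or.inl h))
          have heG : (e : ℕ) ∉ G := fun h => heIG (Finset.mem_insert.mpr (Or.inr h))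
          have heF : (e : ℕ) ∉ F := (hGF _ (Finset.mem_erase.mp e.2).1).mp heG
          obtain ⟨a, ha⟩ := hb3 (incl W m0 e) (by simpa using heven) heF
          have ham : (a : ℕ) ≠ m0 := by
            intro h
            have h4 : a = ⟨m0, hm0⟩ := Subtype.ext h
            rw [h4] at ha
            apply heu
            rw [hu, ha]
            rfl
          refine ⟨⟨(a : ℕ), Finset.mem_erase.mpr ⟨ham, a.2⟩⟩, ?_⟩
          refine Subtype.ext ?_
          rw [restFun_coe hm0 b _ (by
            rw [show incl W m0 ⟨(a : ℕ), Finset.mem_erase.mpr ⟨ham, a.2⟩⟩ = a from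
              Subtype.ext rfl, ha]
            exact incl_coe_ne e)]
          rw [show incl W m0 ⟨(a : ℕ), Finset.mem_erase.mpr ⟨ham, a.2⟩⟩ = a from
            Subtype.ext rfl, ha]
          rfl
    · -- back into filtered set
      intro p hp
      obtain ⟨hp1, hp2⟩ := Finset.mem_sigma.mp hp
      have hu' : p.1 ∈ W.erase m0 := (Finset.mem_filter.mp hp1).1
      have huev : Even p.1 := (Finset.mem_filter.mp hp1).2
      have huW : p.1 ∈ W := Finset.mem_of_mem_erase hu'
      have hum : p.1 ≠ m0 := (Finset.mem_erase.mp hu').1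
      obtain ⟨_, hb1, hb2, hb3⟩ := Finset.mem_filter.mp hp2
      rw [dif_pos huW]
      refine Finset.mem_filter.mpr ⟨Finset.mem_filter.mpr
        ⟨Finset.mem_univ _, ?_, ?_, ?_⟩, ?_⟩
      · intro a
        by_cases h : (a : ℕ) = m0
        · have ha : a = ⟨m0, hm0⟩ := Subtype.ext h
          subst ha
          rw [extFun_apply_m0]
          show m0 ≤ p.1
          exact hm0le _ huW
        · have ha : a = incl W m0 ⟨(a : ℕ), Finset.mem_erase.mpr ⟨h, a.2⟩⟩ := Subtype.ext rfl
          rw [ha, extFun_apply_incl]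
          have := hb1 ⟨(a : ℕ), Finset.mem_erase.mpr ⟨h, a.2⟩⟩
          simpa using this
      · intro a hodd
        by_cases h : (a : ℕ) = m0
        · have ha : a = ⟨m0, hm0⟩ := Subtype.ext h
          subst ha
          rw [extFun_apply_m0] at hodd ⊢
          exact absurd hodd (by
            show ¬ Odd p.1
            exact Nat.not_odd_iff_even.mpr huev)
        · have ha : a = incl W m0 ⟨(a : ℕ), Finset.mem_erase.mpr ⟨h, a.2⟩⟩ := Subtype.ext rfl
          rw [ha, extFun_apply_incl]
          rw [ha, extFun_apply_incl] at hodd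
          have := hb2 ⟨(a : ℕ), Finset.mem_erase.mpr ⟨h, a.2⟩⟩ (by simpa using hodd)
          rw [this]
      · intro e heven heF
        by_cases h : (e : ℕ) = m0
        · exfalso
          have hoddm : Odd m0 := by
            rcases hcase with hc | hc
            · exact absurd (h ▸ heF) (fun hh => hh hc)
            · exact hc
          rw [h] at heven
          exact (Nat.not_odd_iff_even.mpr heven) hoddm
        · by_cases heu : (e : ℕ) = p.1
          · refine ⟨⟨m0, hm0⟩, ?_⟩
            rw [extFun_apply_m0]
            exact Subtype.ext heu.symm
          · have heIG : (e : ℕ) ∉ insert p.1 G := by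
              intro hh
              rcases Finset.mem_insert.mp hh with hh | hh
              · exact heu hh
              · exact heF (Finset.mem_of_mem_erase hh)
            obtain ⟨a', ha'⟩ := hb3 ⟨(e : ℕ), Finset.mem_erase.mpr ⟨h, e.2⟩⟩
              (by simpa using heven) heIG
            refine ⟨incl W m0 a', ?_⟩
            rw [extFun_apply_incl, ha']
            exact Subtype.ext rfl
      · rw [extFun_apply_m0]
        intro hh
        exact hum (congrArg (fun y : ↥W => (y : ℕ)) hh)
    · -- left inverse
      intro b hbf
      obtain ⟨hb, hbfix⟩ := Finset.mem_filter.mp hbf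
      dsimp only
      rw [dif_pos (b ⟨m0, hm0⟩).2]
      rw [show (⟨((b ⟨m0, hm0⟩ : ↥W) : ℕ), (b ⟨m0, hm0⟩).2⟩ : ↥W) = b ⟨m0, hm0⟩ from
        Subtype.ext rfl]
      exact extFun_restFun hm0 b (BDf_min_fix hm0 hmin hb)
    · -- right inverse
      intro p hp
      obtain ⟨hp1, hp2⟩ := Finset.mem_sigma.mp hp
      have hu' : p.1 ∈ W.erase m0 := (Finset.mem_filter.mp hp1).1
      have huW : p.1 ∈ W := Finset.mem_of_mem_erase hu'
      obtain ⟨u0, b'⟩ := p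
      dsimp only at *
      rw [dif_pos huW]
      refine Sigma.ext ?_ (heq_of_eq ?_)
      · rw [extFun_apply_m0]
      · rw [restFun_extFun]
    · -- values
      intro b hbf
      obtain ⟨hb, hbfix⟩ := Finset.mem_filter.mp hbf
      congr 1
      have hbm : ((b ⟨m0, hm0⟩ : ↥W) : ℕ) ≠ m0 := fun h => hbfix (Subtype.ext h)
      conv_lhs => rw [← extFun_restFun hm0 b (BDf_min_fix hm0 hmin hb)]
      rw [fixCount_extFun_ne hm0 _ _ hbm]

end TSide2
section Key
open Finset

lemma isEmpty_empty_coe : IsEmpty ↥((∅ : Finset ℕ)) := by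
  constructor
  rintro ⟨x, hx⟩
  exact absurd hx (Finset.notMem_empty x)

lemma sumP_empty (F : Finset ℕ) : sumP ∅ F = 1 := by
  haveI := isEmpty_empty_coe
  have h1 : DPf ∅ F = Finset.univ := by
    rw [DPf, Finset.filter_true_of_mem]
    intro σ _ a
    exact absurd a.2 (Finset.notMem_empty _)
  rw [sumP, h1]
  have hall : ∀ σ : Equiv.Perm ↥((∅ : Finset ℕ)), cycCount σ = 0 := by
    intro σ
    rw [cycCount, Finset.univ_eq_empty, Finset.image_empty, Finset.card_empty]
  rw [Finset.sum_congr rfl (fun σ _ => by rw [hall σ, pow_zero])]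
  rw [Finset.sum_const, Finset.card_univ, Fintype.card_perm, Fintype.card_eq_zero]
  simp

lemma sumT_empty (F : Finset ℕ) : sumT ∅ F = 1 := by
  haveI := isEmpty_empty_coe
  have h1 : BDf ∅ F = Finset.univ := by
    rw [BDf, Finset.filter_true_of_mem]
    intro b _
    refine ⟨?_, ?_, ?_⟩ <;> intro a <;> exact absurd a.2 (Finset.notMem_empty _)
  rw [sumT, h1]
  have hall : ∀ b : ↥((∅ : Finset ℕ)) → ↥((∅ : Finset ℕ)), fixCount b = 0 := by
    intro b
    rw [fixCount, Finset.univ_eq_empty, Finset.filter_empty, Finset.card_empty]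
  rw [Finset.sum_congr rfl (fun b _ => by rw [hall b, pow_zero])]
  rw [Finset.sum_const, Finset.card_univ, Fintype.card_fun, Fintype.card_eq_zero]
  simp

lemma sumP_eq_sumT : ∀ (W F : Finset ℕ), (∀ u ∈ F, Even u) → sumP W F = sumT W F := by
  intro W
  induction W using Finset.strongInduction with
  | _ W ih =>
    intro F hFev
    rcases Finset.eq_empty_or_nonempty W with rfl | hne
    · rw [sumP_empty, sumT_empty]
    · have hm0 : W.min' hne ∈ W := W.min'_mem hne
      have hmin : ∀ x ∈ W, x ≠ W.min' hne → W.min' hne < x := fun x hx hne' =>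
        lt_of_le_of_ne (W.min'_le x hx) (Ne.symm hne')
      have hsub : W.erase (W.min' hne) ⊂ W := Finset.erase_ssubset hm0
      by_cases hc : W.min' hne ∈ F ∨ Odd (W.min' hne)
      · rw [sumP_min_free hm0 hmin hFev hc, sumT_min_free hm0 hmin hFev hc]
        have hGev : ∀ u ∈ F.erase (W.min' hne), Even u := fun u hu =>
          hFev u (Finset.mem_of_mem_erase hu)
        rw [ih _ hsub _ hGev]
        congr 1
        refine Finset.sum_congr rfl ?_
        intro u hu
        refine ih _ hsub _ ?_
        intro v hv
        rcases Finset.mem_insert.mp hv with rfl | hv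
        · exact (Finset.mem_filter.mp hu).2
        · exact hGev v hv
      · push_neg at hc
        have hev : Even (W.min' hne) := Nat.not_odd_iff_even.mp hc.2
        rw [sumP_even_min hm0 hmin hev hc.1, sumT_even_min hm0 hmin hev hc.1,
          ih _ hsub _ hFev]

end Key
section Assemble
open Finset

lemma lam_eq_sumT (V Rk : Finset ℕ) (hne : V.Nonempty) (hmax : Even (V.max' hne))
    (hReven : (Rk.filter fun a => Even a).card = 1)
    (hRbig : ∀ a ∈ Rk, ∀ v ∈ V, v < a)
    (hRord : ∀ a ∈ Rk, ∀ b ∈ Rk, Even a → Odd b → b < a) :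
    Lam (Polynomial ℤ) (V ∪ Rk) Polynomial.X Polynomial.X 1 0 Polynomial.X 1
      = sumT V ∅ := by
  classical
  set S := V ∪ Rk with hS
  obtain ⟨M, hM⟩ := Finset.card_eq_one.mp hReven
  have hMmem := Finset.mem_filter.mp (hM ▸ Finset.mem_singleton_self M)
  have hMRk : M ∈ Rk := hMmem.1
  have hMev : Even M := hMmem.2
  have hVS : V ⊆ S := Finset.subset_union_left
  have hMS : M ∈ S := Finset.mem_union_right _ hMRk
  set m := V.max' hne with hm
  have hmV : m ∈ V := V.max'_mem hne
  have hVm : ∀ v ∈ V, v ≤ m := fun v hv => V.le_max' v hv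
  have hVltM : ∀ v ∈ V, v < M := fun v hv => hRbig M hMRk v hv
  have hMnV : M ∉ V := fun h => lt_irrefl M (hVltM M h)
  have hRkodd : ∀ a ∈ Rk, a ≠ M → Odd a := by
    intro a ha hne'
    rcases Nat.even_or_odd a with h | h
    · exfalso
      have h2 : a ∈ Rk.filter (fun a => Even a) := Finset.mem_filter.mpr ⟨ha, h⟩
      rw [hM] at h2
      exact hne' (Finset.mem_singleton.mp h2)
    · exact h
  have hRkM : ∀ a ∈ Rk, a ≤ M := by
    intro a ha
    by_cases h : a = M
    · exact le_of_eq h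
    · exact le_of_lt (hRord M hMRk a ha hMev (hRkodd a ha h))
  have hRkm : ∀ a ∈ Rk, m < a := fun a ha => hRbig a ha m hmV
  have hSM : ∀ x ∈ S, x ≤ M := by
    intro x hx
    rcases Finset.mem_union.mp hx with h | h
    · exact le_of_lt (hVltM x h)
    · exact hRkM x h
  have hsup : S.sup id = M :=
    le_antisymm (Finset.sup_le fun x hx => hSM x hx) (Finset.le_sup (f := id) hMS)
  have hsnd : sndEvenMax S = m := by
    have hEvS : (S.filter (fun a => Even a)).erase (S.sup id) = V.filter (fun a => Even a) := by
      rw [hsup]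
      ext x
      constructor
      · intro hx
        obtain ⟨hxM, hxS⟩ := Finset.mem_erase.mp hx
        obtain ⟨hxS', hxev⟩ := Finset.mem_filter.mp hxS
        rcases Finset.mem_union.mp hxS' with h | h
        · exact Finset.mem_filter.mpr ⟨h, hxev⟩
        · exfalso
          have h2 : x ∈ Rk.filter (fun a => Even a) := Finset.mem_filter.mpr ⟨h, hxev⟩
          rw [hM] at h2
          exact hxM (Finset.mem_singleton.mp h2)
      · intro hx
        obtain ⟨hxV, hxev⟩ := Finset.mem_filter.mp hx
        exact Finset.mem_erase.mpr ⟨Nat.ne_of_lt (hVltM x hxV),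
          Finset.mem_filter.mpr ⟨Finset.mem_union_left _ hxV, hxev⟩⟩
    rw [sndEvenMax, hEvS]
    apply le_antisymm
    · exact Finset.sup_le (fun x hx => hVm x (Finset.mem_filter.mp hx).1)
    · exact Finset.le_sup (f := id) (Finset.mem_filter.mpr ⟨hmV, hmax⟩)
  have hleV : ∀ x : ↥S, ((x : ℕ) ≤ m ↔ (x : ℕ) ∈ V) := by
    intro x
    constructor
    · intro hx
      rcases Finset.mem_union.mp x.2 with h | h
      · exact h
      · exfalso
        have := hRkm _ h
        omega
    · exact hVm _
  -- cardinality transfer principle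
  have cardVS : ∀ (p : ↥S → Prop) (q : ↥V → Prop) (ip : DecidablePred p)
      (iq : DecidablePred q),
      (∀ a : ↥V, q a ↔ p ⟨(a : ℕ), hVS a.2⟩) → (∀ x : ↥S, p x → (x : ℕ) ∈ V) →
      (@Finset.filter _ p ip Finset.univ).card = (@Finset.filter _ q iq Finset.univ).card := by
    intro p q ip iq hpq hp
    refine Finset.card_nbij'
      (fun x => if h : (x : ℕ) ∈ V then ⟨(x : ℕ), h⟩ else ⟨m, hmV⟩)
      (fun a => ⟨(a : ℕ), hVS a.2⟩) ?_ ?_ ?_ ?_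
    · intro x hx
      have hpx := (Finset.mem_filter.mp hx).2
      have hxV := hp x hpx
      dsimp only
      rw [dif_pos hxV]
      refine Finset.mem_filter.mpr ⟨Finset.mem_univ _, ?_⟩
      rw [hpq]
      rw [show (⟨((⟨(x : ℕ), hxV⟩ : ↥V) : ℕ), hVS hxV⟩ : ↥S) = x from Subtype.ext rfl]
      exact hpx
    · intro a ha
      refine Finset.mem_filter.mpr ⟨Finset.mem_univ _, ?_⟩
      exact (hpq a).mp (Finset.mem_filter.mp ha).2
    · intro x hx
      have hxV := hp x (Finset.mem_filter.mp hx).2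
      dsimp only
      rw [dif_pos hxV]
    · intro a _
      dsimp only
      rw [dif_pos a.2]
  -- step 1 : kill the even maxima
  have step1 : Lam (Polynomial ℤ) S Polynomial.X Polynomial.X 1 0 Polynomial.X 1
      = ∑ f ∈ (Staircases S).filter (fun f => meS S f = 0),
          (Polynomial.X : Polynomial ℤ) ^ (moS S f + (fdS S f + fiS S f)) := by
    rw [Lam, Finset.sum_filter]
    refine Finset.sum_congr rfl ?_
    intro f _
    by_cases h : meS S f = 0
    · rw [if_pos h, h]
      simp only [one_pow, pow_zero, mul_one, one_mul, pow_add]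
      ring
    · rw [if_neg h, zero_pow h]
      simp
  rw [step1]
  -- step 2 : bijection with BDf V ∅
  rw [sumT]
  refine Finset.sum_nbij'
    (fun f (a : ↥V) => if h : ((f ⟨(a : ℕ), hVS a.2⟩ : ↥S) : ℕ) ∈ V
      then (⟨((f ⟨(a : ℕ), hVS a.2⟩ : ↥S) : ℕ), h⟩ : ↥V) else a)
    (fun b (x : ↥S) => if hx : (x : ℕ) ∈ V then
      (if Odd (x : ℕ) ∧ b ⟨(x : ℕ), hx⟩ = ⟨(x : ℕ), hx⟩ then (⟨M, hMS⟩ : ↥S)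
        else ⟨((b ⟨(x : ℕ), hx⟩ : ↥V) : ℕ), hVS (b ⟨(x : ℕ), hx⟩).2⟩)
      else ⟨M, hMS⟩)
    ?_ ?_ ?_ ?_ ?_
  · -- toB lands in BDf V ∅
    intro f hf
    obtain ⟨hfS, hfme⟩ := Finset.mem_filter.mp hf
    obtain ⟨-, hf1, hf2⟩ := Finset.mem_filter.mp hfS
    refine Finset.mem_filter.mpr ⟨Finset.mem_univ _, ?_, ?_, ?_⟩
    · intro a
      dsimp only
      by_cases h : ((f ⟨(a : ℕ), hVS a.2⟩ : ↥S) : ℕ) ∈ V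
      · rw [dif_pos h]
        exact (hf1 ⟨(a : ℕ), hVS a.2⟩).1
      · rw [dif_neg h]
    · intro a hodd
      dsimp only at hodd ⊢
      by_cases h : ((f ⟨(a : ℕ), hVS a.2⟩ : ↥S) : ℕ) ∈ V
      · rw [dif_pos h] at hodd ⊢
        exfalso
        have := (hf1 ⟨(a : ℕ), hVS a.2⟩).2
        exact (Nat.not_odd_iff_even.mpr this) hodd
      · rw [dif_neg h]
    · intro e heven _
      obtain ⟨x, hx⟩ := hf2 ⟨(e : ℕ), hVS e.2⟩ heven
      have hxV : (x : ℕ) ∈ V := by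
        rw [← hleV x]
        have h1 := (hf1 x).1
        rw [hx] at h1
        have h2 : (e : ℕ) ≤ m := hVm _ e.2
        simp only at h1
        omega
      refine ⟨⟨(x : ℕ), hxV⟩, ?_⟩
      dsimp only
      have hxx : (⟨((⟨(x : ℕ), hxV⟩ : ↥V) : ℕ), hVS hxV⟩ : ↥S) = x := Subtype.ext rfl
      rw [hxx, hx]
      rw [dif_pos e.2]
  · -- toF lands in the staircase filter
    intro b hb
    obtain ⟨-, hb1, hb2, hb3⟩ := Finset.mem_filter.mp hb
    refine Finset.mem_filter.mpr ⟨Finset.mem_filter.mpr ⟨Finset.mem_univ _, ?_, ?_⟩, ?_⟩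
    · intro x
      dsimp only
      by_cases hx : (x : ℕ) ∈ V
      · rw [dif_pos hx]
        by_cases hc : Odd (x : ℕ) ∧ b ⟨(x : ℕ), hx⟩ = ⟨(x : ℕ), hx⟩
        · rw [if_pos hc]
          exact ⟨hSM _ x.2, hMev⟩
        · rw [if_neg hc]
          constructor
          · exact hb1 ⟨(x : ℕ), hx⟩
          · rcases Nat.even_or_odd ((b ⟨(x : ℕ), hx⟩ : ↥V) : ℕ) with h | h
            · exact h
            · exfalso
              have hfix := hb2 ⟨(x : ℕ), hx⟩ h
              rw [hfix] at h
              exact hc ⟨h, hfix⟩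
      · rw [dif_neg hx]
        exact ⟨hSM _ x.2, hMev⟩
    · intro e heven
      by_cases heM : (e : ℕ) = M
      · refine ⟨⟨M, hMS⟩, ?_⟩
        dsimp only
        rw [dif_neg hMnV]
        exact Subtype.ext heM.symm
      · have heV : (e : ℕ) ∈ V := by
          rcases Finset.mem_union.mp e.2 with h | h
          · exact h
          · exfalso
            have h2 : (e : ℕ) ∈ Rk.filter (fun a => Even a) := Finset.mem_filter.mpr ⟨h, heven⟩
            rw [hM] at h2
            exact heM (Finset.mem_singleton.mp h2)
        obtain ⟨a, ha⟩ := hb3 ⟨(e : ℕ), heV⟩ heven (Finset.notMem_empty _)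
        refine ⟨⟨(a : ℕ), hVS a.2⟩, ?_⟩
        dsimp only
        rw [dif_pos a.2]
        have haa : (⟨((⟨(a : ℕ), hVS a.2⟩ : ↥S) : ℕ), a.2⟩ : ↥V) = a := Subtype.ext rfl
        rw [haa]
        have hc : ¬(Odd (a : ℕ) ∧ b a = a) := by
          rintro ⟨hodd, hfix⟩
          rw [hfix] at ha
          have : (a : ℕ) = (e : ℕ) := congrArg (fun y : ↥V => (y : ℕ)) ha
          rw [this] at hodd
          exact (Nat.not_odd_iff_even.mpr heven) hodd
        rw [if_neg hc, ha]
    · -- meS = 0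
      rw [meS, Finset.card_eq_zero, Finset.filter_eq_empty_iff]
      intro x _
      rintro ⟨hxm, hxev, hxM⟩
      rw [hsnd] at hxm
      have hxV : (x : ℕ) ∈ V := (hleV x).mp hxm
      rw [hsup] at hxM
      rw [dif_pos hxV] at hxM
      have hc : ¬(Odd (x : ℕ) ∧ b ⟨(x : ℕ), hxV⟩ = ⟨(x : ℕ), hxV⟩) := by
        rintro ⟨hodd, -⟩
        exact (Nat.not_odd_iff_even.mpr hxev) hodd
      rw [if_neg hc] at hxM
      simp only at hxM
      have : ((b ⟨(x : ℕ), hxV⟩ : ↥V) : ℕ) ∈ V := (b ⟨(x : ℕ), hxV⟩).2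
      rw [hxM] at this
      exact hMnV this
  · -- left inverse : toF (toB f) = f
    intro f hf
    obtain ⟨hfS, hfme⟩ := Finset.mem_filter.mp hf
    obtain ⟨-, hf1, hf2⟩ := Finset.mem_filter.mp hfS
    have hme : ∀ x : ↥S, (x : ℕ) ≤ m → Even (x : ℕ) → ((f x : ↥S) : ℕ) ≠ M := by
      intro x hxm hxev hxM
      have h0 : (Finset.univ.filter fun a : ↥S =>
          (a : ℕ) ≤ sndEvenMax S ∧ Even (a : ℕ) ∧ ((f a : ℕ) = S.sup id)) = ∅ :=
        Finset.card_eq_zero.mp hfme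
      have : x ∈ (∅ : Finset ↥S) := by
        rw [← h0]
        refine Finset.mem_filter.mpr ⟨Finset.mem_univ _, ?_, hxev, ?_⟩
        · rw [hsnd]; exact hxm
        · rw [hsup]; exact hxM
      exact absurd this (Finset.notMem_empty x)
    have hfRk : ∀ x : ↥S, (x : ℕ) ∉ V → f x = ⟨M, hMS⟩ := by
      intro x hxV
      have hxRk : (x : ℕ) ∈ Rk := by
        rcases Finset.mem_union.mp x.2 with h | h
        · exact absurd h hxV
        · exact h
      have hfev := (hf1 x).2
      have hfge := (hf1 x).1
      refine Subtype.ext ?_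
      by_contra hne'
      have hfV : ((f x : ↥S) : ℕ) ∈ V := by
        rcases Finset.mem_union.mp (f x).2 with h | h
        · exact h
        · exfalso
          have h2 : ((f x : ↥S) : ℕ) ∈ Rk.filter (fun a => Even a) :=
            Finset.mem_filter.mpr ⟨h, hfev⟩
          rw [hM] at h2
          exact hne' (Finset.mem_singleton.mp h2)
      have h3 := hVm _ hfV
      have h4 := hRkm _ hxRk
      omega
    funext x
    dsimp only
    by_cases hx : (x : ℕ) ∈ V
    · rw [dif_pos hx]
      by_cases hfM : ((f x : ↥S) : ℕ) = M
      · have hxodd : Odd (x : ℕ) := by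
          rcases Nat.even_or_odd (x : ℕ) with h | h
          · exact absurd hfM (hme x (hVm _ hx) h)
          · exact h
        have hfix : (if h : ((f ⟨(x : ℕ), hVS hx⟩ : ↥S) : ℕ) ∈ V
            then (⟨((f ⟨(x : ℕ), hVS hx⟩ : ↥S) : ℕ), h⟩ : ↥V) else ⟨(x : ℕ), hx⟩)
            = ⟨(x : ℕ), hx⟩ := by
          rw [dif_neg]
          rw [show (⟨(x : ℕ), hVS hx⟩ : ↥S) = x from Subtype.ext rfl, hfM]
          exact hMnV
        rw [if_pos ⟨hxodd, hfix⟩]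
        exact (Subtype.ext hfM).symm
      · have hfV : ((f x : ↥S) : ℕ) ∈ V := by
          rcases Finset.mem_union.mp (f x).2 with h | h
          · exact h
          · exfalso
            have h2 : ((f x : ↥S) : ℕ) ∈ Rk.filter (fun a => Even a) :=
              Finset.mem_filter.mpr ⟨h, (hf1 x).2⟩
            rw [hM] at h2
            exact hfM (Finset.mem_singleton.mp h2)
        have hxx : (⟨(x : ℕ), hVS hx⟩ : ↥S) = x := Subtype.ext rfl
        have hc : ¬(Odd (x : ℕ) ∧ (if h : ((f ⟨(x : ℕ), hVS hx⟩ : ↥S) : ℕ) ∈ V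
            then (⟨((f ⟨(x : ℕ), hVS hx⟩ : ↥S) : ℕ), h⟩ : ↥V) else ⟨(x : ℕ), hx⟩)
            = ⟨(x : ℕ), hx⟩) := by
          rintro ⟨hodd, hfix⟩
          rw [hxx] at hfix
          rw [dif_pos hfV] at hfix
          have h5 : ((f x : ↥S) : ℕ) = (x : ℕ) := congrArg (fun y : ↥V => (y : ℕ)) hfix
          have h6 := (hf1 x).2
          rw [h5] at h6
          exact (Nat.not_odd_iff_even.mpr h6) hodd
        rw [if_neg hc]
        refine Subtype.ext ?_
        simp only
        rw [hxx, dif_pos hfV]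
    · rw [dif_neg hx]
      exact (hfRk x hx).symm
  · -- right inverse : toB (toF b) = b
    intro b hb
    obtain ⟨-, hb1, hb2, hb3⟩ := Finset.mem_filter.mp hb
    funext a
    dsimp only
    have haa : (⟨((⟨(a : ℕ), hVS a.2⟩ : ↥S) : ℕ), a.2⟩ : ↥V) = a := Subtype.ext rfl
    simp only [dif_pos a.2, haa, Subtype.coe_eta]
    by_cases hc : Odd (a : ℕ) ∧ b a = a
    · simp only [if_pos hc, dif_neg hMnV]
      exact hc.2.symm
    · simp only [if_neg hc, dif_pos (b a).2, Subtype.coe_eta]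
  · -- statistics agree
    intro f hf
    obtain ⟨hfS, hfme⟩ := Finset.mem_filter.mp hf
    obtain ⟨-, hf1, hf2⟩ := Finset.mem_filter.mp hfS
    congr 1
    have hme : ∀ x : ↥S, (x : ℕ) ≤ m → Even (x : ℕ) → ((f x : ↥S) : ℕ) ≠ M := by
      intro x hxm hxev hxM
      have h0 : (Finset.univ.filter fun a : ↥S =>
          (a : ℕ) ≤ sndEvenMax S ∧ Even (a : ℕ) ∧ ((f a : ℕ) = S.sup id)) = ∅ :=
        Finset.card_eq_zero.mp hfme
      have : x ∈ (∅ : Finset ↥S) := by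
        rw [← h0]
        refine Finset.mem_filter.mpr ⟨Finset.mem_univ _, ?_, hxev, ?_⟩
        · rw [hsnd]; exact hxm
        · rw [hsup]; exact hxM
      exact absurd this (Finset.notMem_empty x)
    have hfValV : ∀ x : ↥S, ((f x : ↥S) : ℕ) ≠ M → ((f x : ↥S) : ℕ) ∈ V := by
      intro x hne'
      rcases Finset.mem_union.mp (f x).2 with h | h
      · exact h
      · exfalso
        have h2 : ((f x : ↥S) : ℕ) ∈ Rk.filter (fun a => Even a) :=
          Finset.mem_filter.mpr ⟨h, (hf1 x).2⟩
        rw [hM] at h2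
        exact hne' (Finset.mem_singleton.mp h2)
    -- moS as a count over V
    have hmo : moS S f = (Finset.univ.filter fun a : ↥V =>
        Odd (a : ℕ) ∧ ((f ⟨(a : ℕ), hVS a.2⟩ : ↥S) : ℕ) = M).card := by
      rw [moS]
      refine cardVS _ _ _ _ ?_ ?_
      · intro a
        constructor
        · rintro ⟨hodd, hM'⟩
          exact ⟨hsnd ▸ hVm _ a.2, hodd, hsup ▸ hM'⟩
        · rintro ⟨-, hodd, hM'⟩
          exact ⟨hodd, by rw [← hsup]; exact hM'⟩
      · rintro x ⟨hxm, -, -⟩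
        rw [hsnd] at hxm
        exact (hleV x).mp hxm
    -- fdS + fiS as fixed point count
    have hfdfi : fdS S f + fiS S f = (Finset.univ.filter fun a : ↥V =>
        Even (a : ℕ) ∧ f ⟨(a : ℕ), hVS a.2⟩ = ⟨(a : ℕ), hVS a.2⟩).card := by
      have hsplit : fdS S f + fiS S f
          = (Finset.univ.filter fun a : ↥S => IsFixedPtS S f a).card := by
        rw [fdS, fiS]
        have h1 : (Finset.univ.filter fun a : ↥S =>
            IsFixedPtS S f a ∧ ∃ b : ↥S, b ≠ a ∧ f b = a)
            = (Finset.univ.filter fun a : ↥S => IsFixedPtS S f a).filter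
              (fun a => ∃ b : ↥S, b ≠ a ∧ f b = a) := by
          rw [Finset.filter_filter]
        have h2 : (Finset.univ.filter fun a : ↥S =>
            IsFixedPtS S f a ∧ ∀ b : ↥S, f b = a → b = a)
            = (Finset.univ.filter fun a : ↥S => IsFixedPtS S f a).filter
              (fun a => ¬∃ b : ↥S, b ≠ a ∧ f b = a) := by
          rw [Finset.filter_filter]
          refine Finset.filter_congr ?_
          intro x _
          constructor
          · rintro ⟨hfix, hall⟩
            refine ⟨hfix, ?_⟩
            rintro ⟨b, hbne, hbx⟩
            exact hbne (hall b hbx)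
          · rintro ⟨hfix, hnex⟩
            refine ⟨hfix, ?_⟩
            intro b hbx
            by_contra hbne
            exact hnex ⟨b, hbne, hbx⟩
        rw [h1, h2]
        exact Finset.card_filter_add_card_filter_not _
      rw [hsplit]
      refine cardVS _ _ _ _ ?_ ?_
      · intro a
        constructor
        · rintro ⟨hev, hfix⟩
          exact ⟨hsnd ▸ hVm _ a.2, hev, hfix⟩
        · rintro ⟨-, hev, hfix⟩
          exact ⟨hev, hfix⟩
      · rintro x ⟨hxm, -, -⟩
        rw [hsnd] at hxm
        exact (hleV x).mp hxm
    -- fixCount of toB f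
    rw [hmo, hfdfi, fixCount]
    have hsplit2 : (Finset.univ.filter fun a : ↥V =>
        (if h : ((f ⟨(a : ℕ), hVS a.2⟩ : ↥S) : ℕ) ∈ V
          then (⟨((f ⟨(a : ℕ), hVS a.2⟩ : ↥S) : ℕ), h⟩ : ↥V) else a) = a)
        = (Finset.univ.filter fun a : ↥V =>
            Odd (a : ℕ) ∧ ((f ⟨(a : ℕ), hVS a.2⟩ : ↥S) : ℕ) = M)
          ∪ (Finset.univ.filter fun a : ↥V =>
            Even (a : ℕ) ∧ f ⟨(a : ℕ), hVS a.2⟩ = ⟨(a : ℕ), hVS a.2⟩) := by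
      rw [← Finset.filter_or]
      refine Finset.filter_congr ?_
      intro a _
      set x : ↥S := ⟨(a : ℕ), hVS a.2⟩ with hxdef
      constructor
      · intro hfix
        by_cases h : ((f x : ↥S) : ℕ) ∈ V
        · rw [dif_pos h] at hfix
          have h5 : ((f x : ↥S) : ℕ) = (a : ℕ) := congrArg (fun y : ↥V => (y : ℕ)) hfix
          have h6 := (hf1 x).2
          rw [h5] at h6
          exact Or.inr ⟨h6, Subtype.ext h5⟩
        · have hfM : ((f x : ↥S) : ℕ) = M := by
            by_contra hne'
            exact h (hfValV x hne')
          have hodd : Odd (a : ℕ) := by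
            rcases Nat.even_or_odd (a : ℕ) with hh | hh
            · exact absurd hfM (hme x (hVm _ a.2) hh)
            · exact hh
          exact Or.inl ⟨hodd, hfM⟩
      · intro hor
        rcases hor with ⟨hodd, hfM⟩ | ⟨hev, hfix⟩
        · rw [dif_neg (by rw [hfM]; exact hMnV)]
        · rw [dif_pos (by rw [hfix]; exact a.2)]
          refine Subtype.ext ?_
          show ((f x : ↥S) : ℕ) = (a : ℕ)
          rw [hfix]
    rw [hsplit2, Finset.card_union_of_disjoint]
    rw [Finset.disjoint_left]
    intro a hmem1 hmem2
    have hodd := (Finset.mem_filter.mp hmem1).2.1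
    have hev := (Finset.mem_filter.mp hmem2).2.1
    exact (Nat.not_odd_iff_even.mpr hev) hodd
end Assemble
lemma dperms_eq_dpf (V : Finset ℕ) : DPerms V = DPf V ∅ := by
  ext σ
  simp only [DPerms, DPf, Finset.mem_filter, Finset.mem_univ, true_and]
  constructor
  · intro h a _
    exact h a
  · intro h a
    exact h a (Finset.notMem_empty _)
/-- For a finite set `V` of positive integers with even maximum and `R_k` consisting
of `k` odd numbers exceeding `max V` and one even number exceeding those,
`∑_{σ ∈ D_V} t^{c(σ)} = Λ_{V ∪ R_k}(t, t, 1, 0, t, 1)`. -/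
theorem dPerm_cycle_sum_eq_lam (k : ℕ) (V Rk : Finset ℕ) (hne : V.Nonempty)
    (hpos : ∀ v ∈ V, 0 < v) (hmax : Even (V.max' hne))
    (hRodd : (Rk.filter fun a => Odd a).card = k)
    (hReven : (Rk.filter fun a => Even a).card = 1)
    (hRbig : ∀ a ∈ Rk, ∀ v ∈ V, v < a)
    (hRord : ∀ a ∈ Rk, ∀ b ∈ Rk, Even a → Odd b → b < a) :
    ∑ σ ∈ DPerms V, (Polynomial.X : Polynomial ℤ) ^ cycCount σ =
      Lam (Polynomial ℤ) (V ∪ Rk) Polynomial.X Polynomial.X 1 0 Polynomial.X 1 := by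
  rw [show (∑ σ ∈ DPerms V, (Polynomial.X : Polynomial ℤ) ^ cycCount σ) = sumP V ∅ by
    rw [sumP, dperms_eq_dpf]]
  rw [sumP_eq_sumT V ∅ (fun u hu => absurd hu (Finset.notMem_empty u))]
  exact (lam_eq_sumT V Rk hne hmax hReven hRbig hRord).symm

end
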